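/- arXiv:1503.08942 — 3 statements merged into one kernel-verified Lean document; each statement's English description precedes it below -/
import Mathlib

section
/- Let β∖γ be a rook strip and let X, Z be fillings of β∖γ with content α. Then Z <_dom X holds if and only if π(X) < π(Z) in the Bruhat order on Sₙ, where n = |α| and π assigns to a filling the standardization of its reading word (reading from top right to bottom left, reading the 1's as 1,…,α₁ in order, the 2's as α₁+1,…,α₁+α₂, etc.). -/
open Equiv

/-! ### Permutations: adjacent transpositions, Coxeter length, Bruhat order -/

/-- `s` is an adjacent transposition `(i, i+1)` in `S_n` (values `0`-indexed). -/
def IsAdjTrans {n : ℕ} (s : Perm (Fin n)) : Prop :=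
  ∃ (i : ℕ) (h : i + 1 < n), s = Equiv.swap ⟨i, Nat.lt_of_succ_lt h⟩ ⟨i + 1, h⟩

/-- Coxeter length: the minimal number of adjacent transpositions in a factorization. -/
noncomputable def permLength {n : ℕ} (x : Perm (Fin n)) : ℕ :=
  sInf {k | ∃ l : List (Perm (Fin n)), l.length = k ∧ (∀ s ∈ l, IsAdjTrans s) ∧ l.prod = x}

/-- Strict Bruhat order: generated by `u < t * u` for transpositions `t`
increasing the length. -/
def BruhatLT {n : ℕ} (x z : Perm (Fin n)) : Prop :=
  Relation.TransGen
    (fun u v => ∃ t : Perm (Fin n), t.IsSwap ∧ v = t * u ∧ permLength u < permLength v) x z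

/-- Bruhat order (reflexive version). -/
def BruhatLE {n : ℕ} (x z : Perm (Fin n)) : Prop := x = z ∨ BruhatLT x z

/-! ### Partitions -/

/-- A partition: an antitone, finitely supported function `ℕ → ℕ`
(the part `αᵢ` of the paper is `f (i-1)`; rows are `0`-indexed). -/
structure Partn where
  f : ℕ → ℕ
  antitone' : Antitone f
  finite_supp : ∃ N, ∀ i, N ≤ i → f i = 0

/-- `p` is a partition of `n`. -/
def PartnOf (p : Partn) (n : ℕ) : Prop :=
  ∃ N, (∀ i, N ≤ i → p.f i = 0) ∧ ∑ i ∈ Finset.range N, p.f i = n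

/-- The partial sum `α₁ + ⋯ + α_j` of the first `j` parts. -/
def psum (p : Partn) (j : ℕ) : ℕ := ∑ i ∈ Finset.range j, p.f i

/-- The set of block boundaries `α₁, α₁+α₂, …` (`1`-indexed positions). -/
def Bdry (p : Partn) : Set ℕ := {m | ∃ j, 1 ≤ j ∧ m = psum p j}

/-- `S^α`: permutations whose values within each block of `α` occur in increasing
order of position.  Values are `0`-indexed: value `v` is the paper's value `v+1`,
and `v`, `v+1` lie in the same block iff `v+1 ∉ Bdry α`. -/
def SAset (α : Partn) {n : ℕ} (x : Perm (Fin n)) : Prop :=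
  ∀ (v : ℕ) (h : v + 1 < n), (v + 1) ∉ Bdry α →
    x⁻¹ ⟨v, Nat.lt_of_succ_lt h⟩ < x⁻¹ ⟨v + 1, h⟩

/-- Containment of partitions. -/
def PartnSub (γ β : Partn) : Prop := ∀ i, γ.f i ≤ β.f i

/-- The transpose (conjugate) partition: `β'_j = #{i : βᵢ ≥ j}` (columns `0`-indexed). -/
noncomputable def ptranspose (p : Partn) (j : ℕ) : ℕ := Set.ncard {i | j < p.f i}

/-- `β∖γ` is a vertical strip: `βᵢ ≤ γᵢ + 1` for all `i`. -/
def VertStrip (β γ : Partn) : Prop := ∀ i, β.f i ≤ γ.f i + 1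

/-- `β∖γ` is a horizontal strip: `β'∖γ'` is a vertical strip. -/
def HorizStrip (β γ : Partn) : Prop := ∀ j, ptranspose β j ≤ ptranspose γ j + 1

/-- A rook strip is a horizontal and vertical strip. -/
def RookStrip (β γ : Partn) : Prop := VertStrip β γ ∧ HorizStrip β γ

/-- The boxes of the skew diagram `β∖γ` (row, column), `0`-indexed. -/
def SkewCells (β γ : Partn) : Set (ℕ × ℕ) := {c | γ.f c.1 ≤ c.2 ∧ c.2 < β.f c.1}

/-! ### Fillings of skew diagrams -/

/-- A filling of the skew diagram `β∖γ` with content `α`: each box gets an entry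
`≥ 1`, and there are `α_u` entries equal to `u` (the paper's `αᵤ` is `α.f (u-1)`). -/
structure SkFilling (α β γ : Partn) where
  entry : ℕ × ℕ → ℕ
  zero_outside : ∀ c, c ∉ SkewCells β γ → entry c = 0
  pos_inside : ∀ c ∈ SkewCells β γ, 1 ≤ entry c
  content : ∀ u : ℕ, 1 ≤ u → Set.ncard {c ∈ SkewCells β γ | entry c = u} = α.f (u - 1)

/-- The Littlewood–Richardson conditions: rows weakly increase, columns strictly
increase, and the lattice permutation property holds. -/
def IsLRF {α β γ : Partn} (F : SkFilling α β γ) : Prop :=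
  (∀ i j j' : ℕ, (i, j) ∈ SkewCells β γ → (i, j') ∈ SkewCells β γ → j ≤ j' →
      F.entry (i, j) ≤ F.entry (i, j')) ∧
  (∀ i i' j : ℕ, (i, j) ∈ SkewCells β γ → (i', j) ∈ SkewCells β γ → i < i' →
      F.entry (i, j) < F.entry (i', j)) ∧
  (∀ u c : ℕ, 2 ≤ u →
      Set.ncard {p ∈ SkewCells β γ | c ≤ p.2 ∧ F.entry p = u} ≤
      Set.ncard {p ∈ SkewCells β γ | c ≤ p.2 ∧ F.entry p = u - 1})

/-- Row `i` of the partition `γ⁽ᵘ⁾`: the boxes of `γ` together with the boxes of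
`β∖γ` whose entry is at most `u`. -/
noncomputable def regionRow {α β γ : Partn} (F : SkFilling α β γ) (u i : ℕ) : ℕ :=
  γ.f i + Set.ncard {j | (i, j) ∈ SkewCells β γ ∧ F.entry (i, j) ≤ u}

/-- Dominance order on fillings: `Z ≤_dom X` iff `δ⁽ᵘ⁾ ≤_dom γ⁽ᵘ⁾` for every `u`. -/
def DomLE {α β γ : Partn} (Z X : SkFilling α β γ) : Prop :=
  ∀ u j : ℕ, ∑ i ∈ Finset.range j, regionRow Z u i ≤ ∑ i ∈ Finset.range j, regionRow X u i

/-- A single sorting swap: exchange two out-of-order entries within a row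
(left entry bigger) or within a column (upper entry bigger). -/
def SortSwap (β γ : Partn) (W Z : ℕ × ℕ → ℕ) : Prop :=
  ∃ p q : ℕ × ℕ, p ∈ SkewCells β γ ∧ q ∈ SkewCells β γ ∧
    ((p.1 = q.1 ∧ p.2 < q.2) ∨ (p.2 = q.2 ∧ p.1 < q.1)) ∧
    W q < W p ∧
    Z = Function.update (Function.update W p (W q)) q (W p)

/-- `Z` is obtained from `X` by a decreasing box move: two entries of `X` are
exchanged so that the smaller entry is in the lower position after the exchange,
and then rows and columns are re-sorted if necessary. -/
def BoxMove {α β γ : Partn} (X Z : SkFilling α β γ) : Prop :=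
  ∃ p q : ℕ × ℕ, p ∈ SkewCells β γ ∧ q ∈ SkewCells β γ ∧ p.1 < q.1 ∧
    X.entry p < X.entry q ∧
    Relation.ReflTransGen (SortSwap β γ)
      (Function.update (Function.update X.entry p (X.entry q)) q (X.entry p)) Z.entry

/-- The box order on LR-fillings: generated by decreasing box moves. -/
def LeBox {α β γ : Partn} (Z X : SkFilling α β γ) : Prop :=
  Relation.ReflTransGen (fun Y W => IsLRF Y ∧ IsLRF W ∧ BoxMove W Y) Z X

/-! ### Reading words and standardization -/

/-- The block (paper entry, `1`-indexed) containing the `0`-indexed value `v`. -/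
noncomputable def blockIdx (α : Partn) (v : ℕ) : ℕ := sInf {u | v < psum α u}

/-- `e` enumerates the boxes of the rook strip `β∖γ` from top right to bottom
left, i.e. in increasing order of rows. -/
def IsRowRead (β γ : Partn) {n : ℕ} (e : Fin n → ℕ × ℕ) : Prop :=
  (∀ k, e k ∈ SkewCells β γ) ∧ Function.Injective e ∧
  (∀ c ∈ SkewCells β γ, ∃ k, e k = c) ∧
  ∀ k l : Fin n, k < l → (e k).1 < (e l).1

/-- `e` enumerates the boxes of `β∖γ` column by column from left to right, each
column read from bottom to top (the reading order of the word `ω`). -/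
def IsColRead (β γ : Partn) {n : ℕ} (e : Fin n → ℕ × ℕ) : Prop :=
  (∀ k, e k ∈ SkewCells β γ) ∧ Function.Injective e ∧
  (∀ c ∈ SkewCells β γ, ∃ k, e k = c) ∧
  ∀ k l : Fin n, k < l →
    (e k).2 < (e l).2 ∨ ((e k).2 = (e l).2 ∧ (e l).1 < (e k).1)

/-- `p` is the standardization `π(F)` of the reading word of the filling `F`
with respect to the reading enumeration `e`: position `k` receives a value in the
block corresponding to the entry of the `k`-th box, and equal entries receive
their values in reading order. -/
def IsStdOf (α : Partn) {β γ : Partn} {n : ℕ} (F : SkFilling α β γ)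
    (e : Fin n → ℕ × ℕ) (p : Perm (Fin n)) : Prop :=
  (∀ k : Fin n, blockIdx α (p k) = F.entry (e k)) ∧
  ∀ k l : Fin n, k < l → F.entry (e k) = F.entry (e l) → p k < p l

/-- The `α`-recording tableau of `x` is standard: the entries `x⁻¹(psum α u + j)`
increase along rows and down columns of the shape `α` (rows `0`-indexed). -/
def RecStd (α : Partn) {n : ℕ} (x : Perm (Fin n)) : Prop :=
  (∀ u j j' : ℕ, j < j' → j' < α.f u →
    ∀ (h : psum α u + j < n) (h' : psum α u + j' < n),
      x⁻¹ ⟨psum α u + j, h⟩ < x⁻¹ ⟨psum α u + j', h'⟩) ∧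
  (∀ u u' j : ℕ, u < u' → j < α.f u' →
    ∀ (h : psum α u + j < n) (h' : psum α u' + j < n),
      x⁻¹ ⟨psum α u + j, h⟩ < x⁻¹ ⟨psum α u' + j, h'⟩)

/-- Covering relation of the box order on LR-fillings. -/
def CovBox {α β γ : Partn} (X Y : SkFilling α β γ) : Prop :=
  IsLRF X ∧ IsLRF Y ∧ LeBox X Y ∧ X ≠ Y ∧
    ∀ W, IsLRF W → LeBox X W → LeBox W Y → W = X ∨ W = Y

/-- The decreasing block `(i, i-1, …, 1)`. -/
def descBlock (i : ℕ) : List ℕ := ((List.range i).reverse).map (· + 1)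


open Equiv Finset

open scoped Classical in
/-- count of `k : Fin n` satisfying `P`. -/
noncomputable def cnt {n : ℕ} (P : Fin n → Prop) : ℕ :=
  ∑ k : Fin n, if P k then 1 else 0

theorem Equiv.apply_inv_self {α : Type*} (x : Perm α) (a : α) : x (x⁻¹ a) = a :=
  x.apply_symm_apply a

section cnt
variable {n : ℕ}

open scoped Classical

lemma cnt_congr {P Q : Fin n → Prop} (h : ∀ k, P k ↔ Q k) : cnt P = cnt Q := by
  unfold cnt; exact Finset.sum_congr rfl fun k _ => by by_cases hk : P k <;> simp [hk, (h k).mp, fun q => (h k).mpr q] <;> simp_all [h k]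

lemma cnt_le {P Q : Fin n → Prop} (h : ∀ k, P k → Q k) : cnt P ≤ cnt Q := by
  unfold cnt; refine Finset.sum_le_sum fun k _ => ?_
  by_cases hk : P k <;> simp [hk, h k] <;> split <;> omega

lemma cnt_split (P Q : Fin n → Prop) :
    cnt P = cnt (fun k => P k ∧ Q k) + cnt (fun k => P k ∧ ¬ Q k) := by
  unfold cnt; rw [← Finset.sum_add_distrib]
  refine Finset.sum_congr rfl fun k _ => by by_cases h1 : P k <;> by_cases h2 : Q k <;> simp [h1, h2]

lemma cnt_false : cnt (fun _ : Fin n => False) = 0 := by simp only [cnt]; simp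

lemma cnt_point (k0 : Fin n) (P : Fin n → Prop) :
    cnt (fun k => k = k0 ∧ P k) = if P k0 then 1 else 0 := by
  simp only [cnt]
  rw [Finset.sum_eq_single k0]
  · simp
  · intro b _ hb; simp [hb]
  · intro h; exact absurd (Finset.mem_univ k0) h

lemma cnt_succ' {m : ℕ} (hm : m < n) (P : Fin n → Prop) :
    cnt (fun k => (k : ℕ) < m + 1 ∧ P k) =
      cnt (fun k => (k : ℕ) < m ∧ P k) + (if P ⟨m, hm⟩ then 1 else 0) := by
  rw [cnt_split (fun k => (k : ℕ) < m + 1 ∧ P k) (fun k => (k : ℕ) < m)]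
  have h1 : cnt (fun k : Fin n => ((k : ℕ) < m + 1 ∧ P k) ∧ (k : ℕ) < m) =
      cnt (fun k => (k : ℕ) < m ∧ P k) := cnt_congr fun k => by
    constructor
    · rintro ⟨⟨_, hp⟩, hk⟩; exact ⟨hk, hp⟩
    · rintro ⟨hk, hp⟩; exact ⟨⟨by omega, hp⟩, hk⟩
  have h2 : cnt (fun k : Fin n => ((k : ℕ) < m + 1 ∧ P k) ∧ ¬ (k : ℕ) < m) =
      cnt (fun k => k = (⟨m, hm⟩ : Fin n) ∧ P k) := cnt_congr fun k => by
    constructor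
    · rintro ⟨⟨h1, hp⟩, h2⟩
      exact ⟨Fin.ext (by simp only [Fin.val_mk]; omega), hp⟩
    · rintro ⟨hk, hp⟩
      subst hk; exact ⟨⟨by simp, hp⟩, by simp⟩
  rw [h1, h2, cnt_point]

lemma cnt_lt_nat (m : ℕ) : cnt (fun k : Fin n => (k : ℕ) < m) = min m n := by
  induction m with
  | zero => rw [show (fun k : Fin n => (k : ℕ) < 0) = fun _ => False by simp]; simp [cnt_false]
  | succ m ih =>
    by_cases hm : m < n
    · have h1 : cnt (fun k : Fin n => (k : ℕ) < m + 1) =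
          cnt (fun k : Fin n => (k : ℕ) < m + 1 ∧ True) := cnt_congr (by simp)
      have h2 : cnt (fun k : Fin n => (k : ℕ) < m ∧ True) =
          cnt (fun k : Fin n => (k : ℕ) < m) := cnt_congr (by simp)
      rw [h1, cnt_succ' hm, h2, ih]
      simp; omega
    · have h1 : cnt (fun k : Fin n => (k : ℕ) < m + 1) =
          cnt (fun k : Fin n => (k : ℕ) < m) := cnt_congr fun k => by
        have := k.is_lt; constructor <;> intro <;> omega
      rw [h1, ih]; omega

lemma cnt_le_n (P : Fin n → Prop) : cnt P ≤ n := by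
  have h := cnt_le (P := P) (Q := fun k : Fin n => (k : ℕ) < n) (fun k _ => k.is_lt)
  rw [cnt_lt_nat] at h
  omega


lemma cnt_stable {m : ℕ} (hm : n ≤ m) (P : Fin n → Prop) :
    cnt (fun k => (k : ℕ) < m + 1 ∧ P k) = cnt (fun k => (k : ℕ) < m ∧ P k) := by
  refine cnt_congr fun k => ?_
  have := k.is_lt; constructor <;> intro h <;> exact ⟨by omega, h.2⟩

lemma cnt_ge_all {m : ℕ} (hm : n ≤ m) (P : Fin n → Prop) :
    cnt (fun k => (k : ℕ) < m ∧ P k) = cnt P := by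
  refine cnt_congr fun k => ?_
  have := k.is_lt; constructor
  · exact fun h => h.2
  · exact fun h => ⟨by omega, h⟩

/-- downward closed predicate: membership iff below the count. -/
lemma cnt_dc {P : Fin n → Prop} (hdc : ∀ k l : Fin n, k ≤ l → P l → P k) (k : Fin n) :
    P k ↔ (k : ℕ) < cnt P := by
  constructor
  · intro hk
    have h1 : cnt (fun l : Fin n => (l : ℕ) < (k : ℕ) + 1) ≤ cnt P := by
      refine cnt_le fun l hl => hdc l k ?_ hk
      exact Fin.le_def.mpr (by omega)
    rw [cnt_lt_nat] at h1
    have := k.is_lt; omega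
  · intro hk
    by_contra hPk
    have h1 : cnt P ≤ cnt (fun l : Fin n => (l : ℕ) < (k : ℕ)) := by
      refine cnt_le fun l hl => ?_
      by_contra h
      exact hPk (hdc k l (Fin.le_def.mpr (by omega)) hl)
    rw [cnt_lt_nat] at h1
    omega

lemma cnt_perm (x : Perm (Fin n)) (P : Fin n → Prop) :
    cnt (fun k => P (x k)) = cnt P := by
  unfold cnt
  exact Equiv.sum_comp x (fun v => if P v then 1 else 0)

end cnt

section perm
variable {n : ℕ}

/-- rank function: number of positions `k < m` with value `x k < v`. -/
noncomputable def Rk (x : Perm (Fin n)) (m v : ℕ) : ℕ :=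
  cnt (fun k : Fin n => (k : ℕ) < m ∧ (x k : ℕ) < v)

/-- inversion count. -/
noncomputable def invc (x : Perm (Fin n)) : ℕ :=
  ∑ l : Fin n, ((l : ℕ) - Rk x l (x l))

lemma Rk_le (x : Perm (Fin n)) (m v : ℕ) : Rk x m v ≤ min m n := by
  have := cnt_le (P := fun k : Fin n => (k : ℕ) < m ∧ (x k : ℕ) < v)
    (Q := fun k : Fin n => (k : ℕ) < m) (fun k h => h.1)
  rw [cnt_lt_nat] at this
  exact le_trans this (by omega)

lemma Rk_split (x : Perm (Fin n)) {m m' : ℕ} (h : m ≤ m') (v : ℕ) :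
    Rk x m' v = Rk x m v + cnt (fun k => m ≤ (k : ℕ) ∧ (k : ℕ) < m' ∧ (x k : ℕ) < v) := by
  simp only [Rk]
  rw [cnt_split (fun k : Fin n => (k : ℕ) < m' ∧ (x k : ℕ) < v) (fun k => (k : ℕ) < m)]
  congr 1
  · refine cnt_congr fun k => ?_
    constructor
    · rintro ⟨⟨h1, h2⟩, h3⟩; exact ⟨h3, h2⟩
    · rintro ⟨h1, h2⟩; exact ⟨⟨by omega, h2⟩, h1⟩
  · refine cnt_congr fun k => ?_
    constructor
    · rintro ⟨⟨h1, h2⟩, h3⟩; exact ⟨by omega, h1, h2⟩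
    · rintro ⟨h1, h2, h3⟩; exact ⟨⟨h2, h3⟩, by omega⟩

lemma Rk_stable (x : Perm (Fin n)) {m : ℕ} (h : n ≤ m) (v : ℕ) :
    Rk x m v = Rk x n v :=
  cnt_congr fun k => by have := k.is_lt; constructor <;> intro hh <;> exact ⟨by omega, hh.2⟩

lemma Rk_big (x : Perm (Fin n)) {v : ℕ} (h : n ≤ v) (m : ℕ) :
    Rk x m v = min m n := by
  have : Rk x m v = cnt (fun k : Fin n => (k : ℕ) < m) := cnt_congr fun k => by
    have := (x k).is_lt
    constructor
    · exact fun hh => hh.1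
    · exact fun hh => ⟨hh, by omega⟩
  rw [this, cnt_lt_nat]

open scoped Classical in
lemma cnt_pair_split {p q : Fin n} (hpq : p ≠ q) (P : Fin n → Prop) :
    cnt P = cnt (fun k => P k ∧ k ≠ p ∧ k ≠ q)
      + (if P p then 1 else 0) + (if P q then 1 else 0) := by
  have h1 : cnt P = cnt (fun k => P k ∧ k ≠ p ∧ k ≠ q)
      + cnt (fun k => P k ∧ ¬ (k ≠ p ∧ k ≠ q)) := by
    rw [cnt_split P (fun k => k ≠ p ∧ k ≠ q)]
  have h2 : cnt (fun k => P k ∧ ¬ (k ≠ p ∧ k ≠ q))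
      = cnt (fun k => k = p ∧ P k) + cnt (fun k => k = q ∧ P k) := by
    rw [cnt_split (fun k => P k ∧ ¬ (k ≠ p ∧ k ≠ q)) (fun k => k = p)]
    congr 1
    · refine cnt_congr fun k => ?_
      constructor
      · rintro ⟨⟨h, _⟩, hk⟩; exact ⟨hk, h⟩
      · rintro ⟨hk, h⟩; exact ⟨⟨h, by simp [hk]⟩, hk⟩
    · refine cnt_congr fun k => ?_
      constructor
      · rintro ⟨⟨h, hn⟩, hk⟩
        refine ⟨?_, h⟩
        by_contra hq
        exact hn ⟨fun hp => hk hp, hq⟩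
      · rintro ⟨hk, h⟩; exact ⟨⟨h, by simp [hk]⟩, by simp [hk, hpq.symm]⟩
  rw [h1, h2, cnt_point, cnt_point]; ring

/-- master swap lemma. -/
lemma Rk_swap {x : Perm (Fin n)} {a b p q : Fin n} (hab : (a : ℕ) < b)
    (hpq : (p : ℕ) < q) (hxp : x p = a) (hxq : x q = b) (m v : ℕ) :
    Rk (Equiv.swap a b * x) m v
      + (if (p : ℕ) < m ∧ ¬ (q : ℕ) < m ∧ (a : ℕ) < v ∧ ¬ (b : ℕ) < v then 1 else 0)
      = Rk x m v := by
  classical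
  have hpqne : p ≠ q := fun h => by rw [h] at hpq; omega
  have habne : a ≠ b := fun h => by rw [h] at hab; omega
  set y := Equiv.swap a b * x with hy
  have hyp : y p = b := by simp [hy, hxp, Equiv.swap_apply_left]
  have hyq : y q = a := by simp [hy, hxq, Equiv.swap_apply_right]
  have hyk : ∀ k, k ≠ p → k ≠ q → y k = x k := by
    intro k hk1 hk2
    have h1 : x k ≠ a := fun h => hk1 (x.injective (by rw [h, hxp]))
    have h2 : x k ≠ b := fun h => hk2 (x.injective (by rw [h, hxq]))
    simp [hy, Equiv.swap_apply_of_ne_of_ne h1 h2]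
  have hcom : cnt (fun k : Fin n => ((k : ℕ) < m ∧ ((y k : ℕ) < v)) ∧ k ≠ p ∧ k ≠ q)
      = cnt (fun k : Fin n => ((k : ℕ) < m ∧ ((x k : ℕ) < v)) ∧ k ≠ p ∧ k ≠ q) :=
    cnt_congr fun k => by
      constructor
      · rintro ⟨⟨h1, h2⟩, hk⟩; rw [hyk k hk.1 hk.2] at h2; exact ⟨⟨h1, h2⟩, hk⟩
      · rintro ⟨⟨h1, h2⟩, hk⟩; rw [← hyk k hk.1 hk.2] at h2; exact ⟨⟨h1, h2⟩, hk⟩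
  have sy : Rk y m v = cnt (fun k : Fin n => ((k : ℕ) < m ∧ ((x k : ℕ) < v)) ∧ k ≠ p ∧ k ≠ q)
      + (if (p : ℕ) < m ∧ (b : ℕ) < v then 1 else 0)
      + (if (q : ℕ) < m ∧ (a : ℕ) < v then 1 else 0) := by
    rw [Rk, cnt_pair_split hpqne]
    beta_reduce
    rw [hcom]
    congr 2 <;> simp [hyp, hyq]
  have sx : Rk x m v = cnt (fun k : Fin n => ((k : ℕ) < m ∧ ((x k : ℕ) < v)) ∧ k ≠ p ∧ k ≠ q)
      + (if (p : ℕ) < m ∧ (a : ℕ) < v then 1 else 0)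
      + (if (q : ℕ) < m ∧ (b : ℕ) < v then 1 else 0) := by
    rw [Rk, cnt_pair_split hpqne]
    beta_reduce
    congr 2 <;> simp [hxp, hxq]
  rw [sy, sx]
  by_cases h1 : (p : ℕ) < m <;> by_cases h2 : (q : ℕ) < m <;>
    by_cases h3 : (a : ℕ) < v <;> by_cases h4 : (b : ℕ) < v <;>
    simp [h1, h2, h3, h4] <;> omega

lemma Rk_swap_le {x : Perm (Fin n)} {a b p q : Fin n} (hab : (a : ℕ) < b)
    (hpq : (p : ℕ) < q) (hxp : x p = a) (hxq : x q = b) (m v : ℕ) :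
    Rk (Equiv.swap a b * x) m v ≤ Rk x m v := by
  have := Rk_swap hab hpq hxp hxq m v
  omega

lemma Rk_swap_lt {x : Perm (Fin n)} {a b p q : Fin n} (hab : (a : ℕ) < b)
    (hpq : (p : ℕ) < q) (hxp : x p = a) (hxq : x q = b) :
    Rk (Equiv.swap a b * x) ((p : ℕ) + 1) ((a : ℕ) + 1) < Rk x ((p : ℕ) + 1) ((a : ℕ) + 1) := by
  have := Rk_swap hab hpq hxp hxq ((p : ℕ) + 1) ((a : ℕ) + 1)
  rw [if_pos (by omega)] at this
  omega

lemma Rk_swap_eq {x : Perm (Fin n)} {a b p q : Fin n} (hab : (a : ℕ) < b)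
    (hpq : (p : ℕ) < q) (hxp : x p = a) (hxq : x q = b) {m v : ℕ}
    (h : ¬ ((p : ℕ) < m ∧ m ≤ (q : ℕ) ∧ (a : ℕ) < v ∧ v ≤ (b : ℕ))) :
    Rk (Equiv.swap a b * x) m v = Rk x m v := by
  have := Rk_swap hab hpq hxp hxq m v
  rw [if_neg (by omega)] at this
  omega

end perm

section invc
variable {n : ℕ}

lemma invc_swap_facts {x : Perm (Fin n)} {a b p q : Fin n} (hab : (a : ℕ) < b)
    (hpq : (p : ℕ) < q) (hxp : x p = a) (hxq : x q = b) :
    invc x + 1 ≤ invc (Equiv.swap a b * x) ∧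
    ((b : ℕ) = (a : ℕ) + 1 → invc (Equiv.swap a b * x) = invc x + 1) := by
  classical
  have hpqne : p ≠ q := fun h => by rw [h] at hpq; omega
  set y := Equiv.swap a b * x with hy
  have hyp : y p = b := by simp [hy, hxp, Equiv.swap_apply_left]
  have hyq : y q = a := by simp [hy, hxq, Equiv.swap_apply_right]
  have hyk : ∀ k, k ≠ p → k ≠ q → y k = x k := by
    intro k hk1 hk2
    have h1 : x k ≠ a := fun h => hk1 (x.injective (by rw [h, hxp]))
    have h2 : x k ≠ b := fun h => hk2 (x.injective (by rw [h, hxq]))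
    simp [hy, Equiv.swap_apply_of_ne_of_ne h1 h2]
  -- decompose the invc sums over univ erase p erase q
  have hpu : p ∈ (Finset.univ : Finset (Fin n)).erase q :=
    Finset.mem_erase.mpr ⟨hpqne, Finset.mem_univ p⟩
  have hde : ∀ z : Perm (Fin n), invc z =
      (∑ l ∈ (Finset.univ.erase q).erase p, ((l : ℕ) - Rk z l (z l)))
        + ((p : ℕ) - Rk z p (z p)) + ((q : ℕ) - Rk z q (z q)) := by
    intro z
    rw [invc, ← Finset.sum_erase_add _ _ (Finset.mem_univ q), ← Finset.sum_erase_add _ _ hpu]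
  -- middle-count compare
  have hMa : Rk x q ((a:ℕ)) = Rk x p ((a:ℕ)) +
      cnt (fun k => (p:ℕ) ≤ k ∧ (k:ℕ) < q ∧ ((x k : ℕ) < a)) := Rk_split x (le_of_lt hpq) _
  have hMb : Rk x q ((b:ℕ)) = Rk x p ((b:ℕ)) +
      cnt (fun k => (p:ℕ) ≤ k ∧ (k:ℕ) < q ∧ ((x k : ℕ) < b)) := Rk_split x (le_of_lt hpq) _
  -- split off the k = p term
  have hsl : ∀ v : ℕ, cnt (fun k : Fin n => (p:ℕ) ≤ k ∧ (k:ℕ) < q ∧ ((x k : ℕ) < v))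
      = cnt (fun k : Fin n => (p:ℕ) < k ∧ (k:ℕ) < q ∧ ((x k : ℕ) < v))
        + (if (a : ℕ) < v then 1 else 0) := by
    intro v
    rw [cnt_split (fun k : Fin n => (p:ℕ) ≤ k ∧ (k:ℕ) < q ∧ ((x k : ℕ) < v)) (fun k => (p:ℕ) < k)]
    congr 1
    · refine cnt_congr fun k => ?_
      constructor
      · rintro ⟨⟨_, h2, h3⟩, h4⟩; exact ⟨h4, h2, h3⟩
      · rintro ⟨h1, h2, h3⟩; exact ⟨⟨by omega, h2, h3⟩, h1⟩
    · have : ∀ k : Fin n, (((p:ℕ) ≤ k ∧ (k:ℕ) < q ∧ ((x k : ℕ) < v)) ∧ ¬ (p:ℕ) < k)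
          ↔ (k = p ∧ ((x k : ℕ) < v)) := by
        intro k
        constructor
        · rintro ⟨⟨h1, h2, h3⟩, h4⟩
          exact ⟨Fin.ext (by omega), h3⟩
        · rintro ⟨hk, h3⟩
          subst hk; exact ⟨⟨le_refl _, hpq, h3⟩, by omega⟩
      rw [cnt_congr this, cnt_point, hxp]
      split_ifs <;> rfl
  have hMab : cnt (fun k : Fin n => (p:ℕ) < k ∧ (k:ℕ) < q ∧ ((x k : ℕ) < (a:ℕ)))
      ≤ cnt (fun k : Fin n => (p:ℕ) < k ∧ (k:ℕ) < q ∧ ((x k : ℕ) < (b:ℕ))) :=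
    cnt_le fun k => by rintro ⟨h1, h2, h3⟩; exact ⟨h1, h2, by omega⟩
  have hMeq : (b:ℕ) = (a:ℕ) + 1 →
      cnt (fun k : Fin n => (p:ℕ) < k ∧ (k:ℕ) < q ∧ ((x k : ℕ) < (a:ℕ)))
      = cnt (fun k : Fin n => (p:ℕ) < k ∧ (k:ℕ) < q ∧ ((x k : ℕ) < (b:ℕ))) := by
    intro hba
    refine cnt_congr fun k => ?_
    have hkp : (p:ℕ) < (k:ℕ) → (x k : ℕ) ≠ (a : ℕ) := by
      intro h hc
      have h5 : x k = a := Fin.ext hc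
      have h6 : k = p := x.injective (by rw [h5, hxp])
      subst h6; omega
    constructor
    · rintro ⟨h1, h2, h3⟩; exact ⟨h1, h2, by omega⟩
    · rintro ⟨h1, h2, h3⟩; have := hkp h1; exact ⟨h1, h2, by omega⟩
  have e1 : Rk x ((q:ℕ)) ((b:ℕ)) = Rk x ((p:ℕ)) ((b:ℕ))
      + cnt (fun k : Fin n => (p:ℕ) < k ∧ (k:ℕ) < q ∧ ((x k : ℕ) < (b:ℕ))) + 1 := by
    rw [hMb, hsl, if_pos hab]
    omega
  have e2 : Rk x ((q:ℕ)) ((a:ℕ)) = Rk x ((p:ℕ)) ((a:ℕ))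
      + cnt (fun k : Fin n => (p:ℕ) < k ∧ (k:ℕ) < q ∧ ((x k : ℕ) < (a:ℕ))) := by
    rw [hMa, hsl, if_neg (lt_irrefl _)]
    omega
  have hRyp : Rk y ((p:ℕ)) ((b:ℕ)) = Rk x ((p:ℕ)) ((b:ℕ)) := Rk_swap_eq hab hpq hxp hxq (by omega)
  have hRyq : Rk y ((q:ℕ)) ((a:ℕ)) = Rk x ((q:ℕ)) ((a:ℕ)) := Rk_swap_eq hab hpq hxp hxq (by omega)
  have hb1 : Rk x ((q:ℕ)) ((b:ℕ)) ≤ (q:ℕ) := le_trans (Rk_le x _ _) (by omega)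
  have hb2 : Rk x ((q:ℕ)) ((a:ℕ)) ≤ (q:ℕ) := le_trans (Rk_le x _ _) (by omega)
  have hb3 : Rk x ((p:ℕ)) ((b:ℕ)) ≤ (p:ℕ) := le_trans (Rk_le x _ _) (by omega)
  have hb4 : Rk x ((p:ℕ)) ((a:ℕ)) ≤ Rk x ((p:ℕ)) ((b:ℕ)) := cnt_le fun k => by
    rintro ⟨h1, h2⟩; exact ⟨h1, by omega⟩
  have hoff : ∀ l ∈ (Finset.univ.erase q).erase p,
      ((l : ℕ) - Rk x l ((x l : ℕ))) ≤ ((l : ℕ) - Rk y l ((y l : ℕ))) := by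
    intro l hl
    have hl1 : l ≠ p := Finset.ne_of_mem_erase hl
    have hl2 : l ≠ q := Finset.ne_of_mem_erase (Finset.mem_of_mem_erase hl)
    rw [hyk l hl1 hl2]
    have h9 : Rk y (l : ℕ) ((x l : ℕ)) ≤ Rk x (l : ℕ) ((x l : ℕ)) :=
      Rk_swap_le hab hpq hxp hxq (l : ℕ) ((x l : ℕ))
    omega
  have hoffeq : (b:ℕ) = (a:ℕ) + 1 → ∀ l ∈ (Finset.univ.erase q).erase p,
      ((l : ℕ) - Rk y l ((y l : ℕ))) = ((l : ℕ) - Rk x l ((x l : ℕ))) := by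
    intro hba l hl
    have hl1 : l ≠ p := Finset.ne_of_mem_erase hl
    have hl2 : l ≠ q := Finset.ne_of_mem_erase (Finset.mem_of_mem_erase hl)
    rw [hyk l hl1 hl2]
    have hxl1 : x l ≠ a := fun h => hl1 (x.injective (by rw [h, hxp]))
    have hxl2 : x l ≠ b := fun h => hl2 (x.injective (by rw [h, hxq]))
    have hne1 : (x l : ℕ) ≠ (a:ℕ) := fun h => hxl1 (Fin.ext h)
    have hne2 : (x l : ℕ) ≠ (b:ℕ) := fun h => hxl2 (Fin.ext h)
    have h9 : Rk y (l : ℕ) ((x l : ℕ)) = Rk x (l : ℕ) ((x l : ℕ)) :=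
      Rk_swap_eq hab hpq hxp hxq (by omega)
    rw [h9]
  rw [hde x, hde y, hyp, hyq, hxp, hxq]
  constructor
  · have hsum : (∑ l ∈ (Finset.univ.erase q).erase p, ((l : ℕ) - Rk x ((l:ℕ)) ((x l : ℕ))))
        ≤ ∑ l ∈ (Finset.univ.erase q).erase p, ((l : ℕ) - Rk y ((l:ℕ)) ((y l : ℕ))) :=
      Finset.sum_le_sum hoff
    omega
  · intro hba
    have hsum : (∑ l ∈ (Finset.univ.erase q).erase p, ((l : ℕ) - Rk y l ((y l : ℕ))))
        = ∑ l ∈ (Finset.univ.erase q).erase p, ((l : ℕ) - Rk x l ((x l : ℕ))) :=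
      Finset.sum_congr rfl (hoffeq hba)
    have hM := hMeq hba
    omega

end invc

section plen
variable {n : ℕ}

lemma invc_one : invc (1 : Perm (Fin n)) = 0 := by
  rw [invc]
  refine Finset.sum_eq_zero fun l _ => ?_
  have h1 : Rk (1 : Perm (Fin n)) (l : ℕ) (((1 : Perm (Fin n)) l : ℕ)) =
      cnt (fun k : Fin n => (k : ℕ) < (l : ℕ)) := by
    refine cnt_congr fun k => ?_
    simp only [Equiv.Perm.one_apply]
    constructor
    · exact fun h => h.1
    · exact fun h => ⟨h, by exact h⟩
  rw [h1, cnt_lt_nat]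
  have := l.is_lt
  omega

lemma strictMono_eq_one {x : Perm (Fin n)} (h : ∀ k l : Fin n, k < l → x k < x l) :
    x = 1 := by
  have hle : ∀ (f : Perm (Fin n)), (∀ k l : Fin n, k < l → f k < f l) →
      ∀ m : ℕ, ∀ hm : m < n, m ≤ (f ⟨m, hm⟩ : ℕ) := by
    intro f hf m
    induction m with
    | zero => intro hm; omega
    | succ m ih =>
      intro hm
      have h1 : f ⟨m, by omega⟩ < f ⟨m + 1, hm⟩ := hf _ _ (by simp [Fin.lt_def])
      have h2 := ih (by omega)
      rw [Fin.lt_def] at h1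
      omega
  have hinv : ∀ k l : Fin n, k < l → x⁻¹ k < x⁻¹ l := by
    intro k l hkl
    rcases lt_trichotomy (x⁻¹ k) (x⁻¹ l) with hc | hc | hc
    · exact hc
    · exfalso
      have hkeq : k = l := by rw [← x.apply_inv_self k, hc, x.apply_inv_self]
      rw [hkeq] at hkl; exact lt_irrefl _ hkl
    · have := h _ _ hc
      simp at this
      omega
  refine Equiv.ext fun k => ?_
  have h1 : (k : ℕ) ≤ (x k : ℕ) := by
    have := hle x h (k : ℕ) k.is_lt
    simpa using this
  have h2 : ((x k) : ℕ) ≤ (k : ℕ) := by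
    have := hle x⁻¹ hinv ((x k) : ℕ) (x k).is_lt
    have h3 : x⁻¹ ⟨((x k) : ℕ), (x k).is_lt⟩ = k := by
      simp [Fin.eta]
    rw [h3] at this
    exact this
  simp [Fin.ext_iff]
  omega

lemma invc_zero_iff {x : Perm (Fin n)} : invc x = 0 ↔ x = 1 := by
  constructor
  · intro h
    rw [invc, Finset.sum_eq_zero_iff] at h
    refine strictMono_eq_one fun k l hkl => ?_
    have hl := h l (Finset.mem_univ l)
    have hRle : Rk x (l : ℕ) ((x l : ℕ)) ≤ min (l : ℕ) n := Rk_le x _ _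
    have heq : Rk x (l : ℕ) ((x l : ℕ)) = (l : ℕ) := by
      have := l.is_lt; omega
    -- all k < l have x k < x l
    by_contra hc
    have hcnt : cnt (fun k' : Fin n => (k' : ℕ) < (l : ℕ) ∧ ((x k' : ℕ) < (x l : ℕ)))
        < cnt (fun k' : Fin n => (k' : ℕ) < (l : ℕ)) := by
      simp only [cnt]
      refine Finset.sum_lt_sum (fun i _ => by split_ifs <;> omega) ⟨k, Finset.mem_univ k, ?_⟩
      have hkl' : (k : ℕ) < (l : ℕ) := Fin.lt_def.mp hkl
      have hxkl : ¬ ((x k : ℕ) < (x l : ℕ)) := by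
        intro hh
        exact hc (Fin.lt_def.mpr hh)
      simp [hkl', hxkl]
    rw [cnt_lt_nat] at hcnt
    have := l.is_lt
    rw [Rk] at heq
    omega
  · rintro rfl; exact invc_one

lemma exists_descent {x : Perm (Fin n)} (h : x ≠ 1) :
    ∃ (c : ℕ) (hc : c + 1 < n), x⁻¹ ⟨c + 1, hc⟩ < x⁻¹ ⟨c, by omega⟩ := by
  by_contra hc
  push_neg at hc
  apply h
  have hmono : ∀ m : ℕ, ∀ hm : m + 1 < n, x⁻¹ ⟨m, by omega⟩ < x⁻¹ ⟨m + 1, hm⟩ := by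
    intro m hm
    have := hc m hm
    rcases lt_trichotomy (x⁻¹ ⟨m, by omega⟩) (x⁻¹ ⟨m + 1, hm⟩) with hlt | heq | hgt
    · exact hlt
    · exfalso
      have := x⁻¹.injective (heq)
      simp [Fin.ext_iff] at this
    · exact absurd hgt (not_lt.mpr this)
  -- x⁻¹ strict mono on successive values implies strict mono
  have hmono2 : ∀ d m : ℕ, ∀ hm : m + d + 1 < n,
      x⁻¹ ⟨m, by omega⟩ < x⁻¹ ⟨m + d + 1, hm⟩ := by
    intro d
    induction d with
    | zero => intro m hm; exact hmono m hm
    | succ d ih =>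
      intro m hm
      have h1 := ih m (by omega)
      have h2 := hmono (m + d + 1) (by omega)
      have h3 : (⟨m + d + 1 + 1, by omega⟩ : Fin n) = ⟨m + (d + 1) + 1, hm⟩ := by
        simp [Fin.ext_iff]; omega
      rw [h3] at h2
      exact lt_trans h1 h2
  have hsm : ∀ k l : Fin n, k < l → x⁻¹ k < x⁻¹ l := by
    intro k l hkl
    have hkl' : (k : ℕ) < (l : ℕ) := Fin.lt_def.mp hkl
    have hl := l.is_lt
    have := hmono2 ((l : ℕ) - (k : ℕ) - 1) (k : ℕ) (by omega)
    have h3 : (⟨(k : ℕ) + ((l : ℕ) - (k : ℕ) - 1) + 1, by omega⟩ : Fin n) = l := by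
      simp [Fin.ext_iff]; omega
    rw [h3] at this
    have h4 : (⟨(k : ℕ), by omega⟩ : Fin n) = k := rfl
    rw [h4] at this
    exact this
  have : x⁻¹ = 1 := strictMono_eq_one hsm
  calc x = (x⁻¹)⁻¹ := by simp
  _ = 1 := by rw [this]; simp

lemma isAdjTrans_swap {c : ℕ} (hc : c + 1 < n) :
    IsAdjTrans (Equiv.swap (⟨c, by omega⟩ : Fin n) ⟨c + 1, hc⟩) := ⟨c, hc, rfl⟩

lemma invc_adj_le {c : ℕ} (hc : c + 1 < n) (x : Perm (Fin n)) :
    invc (Equiv.swap (⟨c, by omega⟩ : Fin n) ⟨c + 1, hc⟩ * x) ≤ invc x + 1 := by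
  set a : Fin n := ⟨c, by omega⟩
  set b : Fin n := ⟨c + 1, hc⟩
  have hab : (a : ℕ) < (b : ℕ) := by simp [a, b]
  have hba : (b : ℕ) = (a : ℕ) + 1 := by simp [a, b]
  rcases lt_trichotomy ((x⁻¹ a : Fin n) : ℕ) ((x⁻¹ b : Fin n) : ℕ) with hlt | heq | hgt
  · have := (invc_swap_facts hab hlt (x.apply_inv_self a) (x.apply_inv_self b)).2 hba
    omega
  · exfalso
    have : x⁻¹ a = x⁻¹ b := Fin.ext heq
    have := x⁻¹.injective this
    simp [a, b, Fin.ext_iff] at this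
  · -- misaligned: s * x has smaller invc
    set y := Equiv.swap a b * x with hy
    have hyinva : y⁻¹ a = x⁻¹ b := by
      simp [hy, mul_inv_rev, Equiv.swap_apply_left]
    have hyinvb : y⁻¹ b = x⁻¹ a := by
      simp [hy, mul_inv_rev, Equiv.swap_apply_right]
    have h2 := (invc_swap_facts hab (p := y⁻¹ a) (q := y⁻¹ b)
      (by rw [hyinva, hyinvb]; exact hgt) (y.apply_inv_self a) (y.apply_inv_self b)).2 hba
    have h3 : Equiv.swap a b * y = x := by
      rw [hy, ← mul_assoc, Equiv.swap_mul_self, one_mul]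
    rw [h3] at h2
    omega

lemma invc_adj_desc {c : ℕ} (hc : c + 1 < n) (x : Perm (Fin n))
    (hdesc : ((x⁻¹ ⟨c + 1, hc⟩ : Fin n) : ℕ) < ((x⁻¹ ⟨c, by omega⟩ : Fin n) : ℕ)) :
    invc (Equiv.swap (⟨c, by omega⟩ : Fin n) ⟨c + 1, hc⟩ * x) + 1 = invc x := by
  set a : Fin n := ⟨c, by omega⟩
  set b : Fin n := ⟨c + 1, hc⟩
  have hab : (a : ℕ) < (b : ℕ) := by simp [a, b]
  have hba : (b : ℕ) = (a : ℕ) + 1 := by simp [a, b]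
  set y := Equiv.swap a b * x with hy
  have hyinva : y⁻¹ a = x⁻¹ b := by
    simp [hy, mul_inv_rev, Equiv.swap_apply_left]
  have hyinvb : y⁻¹ b = x⁻¹ a := by
    simp [hy, mul_inv_rev, Equiv.swap_apply_right]
  have h2 := (invc_swap_facts hab (p := y⁻¹ a) (q := y⁻¹ b)
    (by rw [hyinva, hyinvb]; exact hdesc) (y.apply_inv_self a) (y.apply_inv_self b)).2 hba
  have h3 : Equiv.swap a b * y = x := by
    rw [hy, ← mul_assoc, Equiv.swap_mul_self, one_mul]
  rw [h3] at h2
  omega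

lemma invc_list_le : ∀ (l : List (Perm (Fin n))), (∀ s ∈ l, IsAdjTrans s) →
    invc l.prod ≤ l.length := by
  intro l
  induction l with
  | nil => intro _; simp [invc_one]
  | cons s l ih =>
    intro hadj
    have hs := hadj s List.mem_cons_self
    obtain ⟨c, hc, rfl⟩ := hs
    rw [List.prod_cons]
    have h1 := invc_adj_le hc l.prod
    have h2 := ih (fun t ht => hadj t (List.mem_cons_of_mem _ ht))
    simp only [List.length_cons]
    omega

lemma invc_list_exists : ∀ (N : ℕ) (x : Perm (Fin n)), invc x = N →
    ∃ l : List (Perm (Fin n)), l.length = invc x ∧ (∀ s ∈ l, IsAdjTrans s) ∧ l.prod = x := by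
  intro N
  induction N using Nat.strong_induction_on with
  | _ N ih =>
    intro x hx
    by_cases h1 : x = 1
    · subst h1
      exact ⟨[], by simp [invc_one], by simp, by simp⟩
    · obtain ⟨c, hc, hdesc⟩ := exists_descent h1
      have hdesc' := Fin.lt_def.mp hdesc
      have h2 := invc_adj_desc hc x hdesc'
      set s := Equiv.swap (⟨c, by omega⟩ : Fin n) ⟨c + 1, hc⟩ with hs
      have h3 : invc (s * x) < N := by omega
      obtain ⟨l, hl1, hl2, hl3⟩ := ih (invc (s * x)) (by omega) (s * x) rfl
      refine ⟨s :: l, ?_, ?_, ?_⟩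
      · simp [hl1]; omega
      · intro t ht
        rcases List.mem_cons.mp ht with rfl | ht
        · exact isAdjTrans_swap hc
        · exact hl2 t ht
      · rw [List.prod_cons, hl3, ← mul_assoc, hs, Equiv.swap_mul_self, one_mul]

lemma permLength_eq (x : Perm (Fin n)) : permLength x = invc x := by
  obtain ⟨l, hl1, hl2, hl3⟩ := invc_list_exists (invc x) x rfl
  refine le_antisymm (Nat.sInf_le ⟨l, hl1, hl2, hl3⟩) ?_
  refine le_csInf ⟨invc x, l, hl1, hl2, hl3⟩ ?_
  rintro k ⟨l', hl1', hl2', hl3'⟩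
  have := invc_list_le l' hl2'
  rw [hl3'] at this
  omega

end plen

section bruhat
variable {n : ℕ}

/-- one Bruhat step decreases the rank matrix pointwise and increases invc. -/
lemma step_Rk {u v : Perm (Fin n)}
    (h : ∃ t : Perm (Fin n), t.IsSwap ∧ v = t * u ∧ permLength u < permLength v) :
    (∀ m w : ℕ, Rk v m w ≤ Rk u m w) ∧ invc u < invc v := by
  obtain ⟨t, ⟨A, B, hAB, rfl⟩, rfl, hlen⟩ := h
  rw [permLength_eq, permLength_eq] at hlen
  -- wlog A < B
  wlog hABlt : (A : ℕ) < (B : ℕ) generalizing A B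
  · have hBA : (B : ℕ) < (A : ℕ) := by
      rcases lt_trichotomy ((A : Fin n) : ℕ) ((B : Fin n) : ℕ) with h1 | h1 | h1
      · exact absurd h1 hABlt
      · exact absurd (Fin.ext h1) hAB
      · exact h1
    have hsw : Equiv.swap A B = Equiv.swap B A := Equiv.swap_comm A B
    rw [hsw] at hlen ⊢
    exact this B A hAB.symm hlen hBA
  have hpqne : u⁻¹ A ≠ u⁻¹ B := fun h => hAB (by
    have := congrArg u h; simpa using this)
  rcases lt_trichotomy ((u⁻¹ A : Fin n) : ℕ) ((u⁻¹ B : Fin n) : ℕ) with hpq | hpq | hpq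
  · constructor
    · intro m w
      exact Rk_swap_le hABlt hpq (u.apply_inv_self A) (u.apply_inv_self B) m w
    · have := (invc_swap_facts hABlt hpq (u.apply_inv_self A) (u.apply_inv_self B)).1
      omega
  · exact absurd (Fin.ext hpq) hpqne
  · exfalso
    set y := Equiv.swap A B * u with hy
    have hyinva : y⁻¹ A = u⁻¹ B := by
      simp [hy, mul_inv_rev, Equiv.swap_apply_left]
    have hyinvb : y⁻¹ B = u⁻¹ A := by
      simp [hy, mul_inv_rev, Equiv.swap_apply_right]
    have h2 := (invc_swap_facts hABlt (p := y⁻¹ A) (q := y⁻¹ B)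
      (by rw [hyinva, hyinvb]; exact hpq) (y.apply_inv_self A) (y.apply_inv_self B)).1
    have h3 : Equiv.swap A B * y = u := by
      rw [hy, ← mul_assoc, Equiv.swap_mul_self, one_mul]
    rw [h3] at h2
    omega

lemma bruhatLT_Rk {x z : Perm (Fin n)} (h : BruhatLT x z) :
    (∀ m w : ℕ, Rk z m w ≤ Rk x m w) ∧ invc x < invc z := by
  induction h with
  | single h => exact step_Rk h
  | tail _ hstep ih =>
    have h2 := step_Rk hstep
    exact ⟨fun m w => le_trans (h2.1 m w) (ih.1 m w), lt_trans ih.2 h2.2⟩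

/-- the permutation is determined by its rank matrix values on the grid. -/
lemma eq_of_Rk_eq {x z : Perm (Fin n)}
    (h : ∀ m w : ℕ, m ≤ n → w ≤ n → Rk x m w = Rk z m w) : x = z := by
  refine Equiv.ext fun k => ?_
  have hk := k.is_lt
  by_contra hne
  have hne' : ((x k : ℕ)) ≠ ((z k : ℕ)) := fun hh => hne (Fin.ext hh)
  -- wlog x k < z k by symmetry; handle both cases directly
  have key : ∀ (x' z' : Perm (Fin n)), ((x' k : ℕ)) < ((z' k : ℕ)) →
      (∀ m w : ℕ, m ≤ n → w ≤ n → Rk x' m w = Rk z' m w) → False := by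
    intro x' z' hlt heq
    have h1 : Rk x' ((k : ℕ) + 1) ((x' k : ℕ) + 1)
        = Rk x' ((k : ℕ)) ((x' k : ℕ) + 1) + 1 := by
      rw [Rk, Rk, cnt_succ' hk]
      simp only [Fin.eta]
      rw [if_pos (by omega)]
    have h2 : Rk z' ((k : ℕ) + 1) ((x' k : ℕ) + 1)
        = Rk z' ((k : ℕ)) ((x' k : ℕ) + 1) := by
      rw [Rk, Rk, cnt_succ' hk]
      simp only [Fin.eta]
      rw [if_neg (by omega)]
      omega
    have e1 := heq ((k : ℕ) + 1) ((x' k : ℕ) + 1) (by omega) (by have := (x' k).is_lt; omega)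
    have e2 := heq ((k : ℕ)) ((x' k : ℕ) + 1) (by omega) (by have := (x' k).is_lt; omega)
    omega
  rcases lt_or_gt_of_ne hne' with hlt | hgt
  · exact key x z hlt h
  · exact key z x hgt (fun m w hm hw => (h m w hm hw).symm)

/-- The measure used for the induction in the hard direction. -/
noncomputable def Mgrid (x z : Perm (Fin n)) : ℕ :=
  ∑ p ∈ Finset.range (n + 1) ×ˢ Finset.range (n + 1), (Rk x p.1 p.2 - Rk z p.1 p.2)

lemma bruhatLT_of_Rk : ∀ (N : ℕ) (x z : Perm (Fin n)),
    (∀ m w : ℕ, Rk z m w ≤ Rk x m w) → x ≠ z → Mgrid x z = N → BruhatLT x z := by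
  intro N
  induction N using Nat.strong_induction_on with
  | _ N ih =>
    intro x z hle hne hM
    -- find first difference
    classical
    have hDne : (Finset.univ.filter (fun k : Fin n => x k ≠ z k)).Nonempty := by
      by_contra hD
      rw [Finset.not_nonempty_iff_eq_empty] at hD
      apply hne
      refine Equiv.ext fun k => ?_
      by_contra hk
      have : k ∈ Finset.univ.filter (fun k : Fin n => x k ≠ z k) :=
        Finset.mem_filter.mpr ⟨Finset.mem_univ k, hk⟩
      rw [hD] at this
      exact absurd this (Finset.notMem_empty k)
    set i := (Finset.univ.filter (fun k : Fin n => x k ≠ z k)).min' hDne with hi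
    have hine : x i ≠ z i := by
      have := (Finset.univ.filter (fun k : Fin n => x k ≠ z k)).min'_mem hDne
      rw [← hi] at this
      exact (Finset.mem_filter.mp this).2
    have hprefix : ∀ k : Fin n, (k : ℕ) < (i : ℕ) → x k = z k := by
      intro k hk
      by_contra hc
      have hmem : k ∈ Finset.univ.filter (fun k : Fin n => x k ≠ z k) :=
        Finset.mem_filter.mpr ⟨Finset.mem_univ k, hc⟩
      have := Finset.min'_le _ k hmem
      rw [← hi] at this
      rw [Fin.le_def] at this
      omega
    have hRpre : ∀ m w : ℕ, m ≤ (i : ℕ) → Rk x m w = Rk z m w := by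
      intro m w hm
      refine cnt_congr fun k => ?_
      constructor
      · rintro ⟨h1, h2⟩
        rw [hprefix k (by omega)] at h2; exact ⟨h1, h2⟩
      · rintro ⟨h1, h2⟩
        rw [← hprefix k (by omega)] at h2; exact ⟨h1, h2⟩
    -- a < c
    have hi_lt : (i : ℕ) < n := i.is_lt
    have hac : ((x i : ℕ)) < ((z i : ℕ)) := by
      rcases lt_trichotomy ((x i : ℕ)) ((z i : ℕ)) with hh | hh | hh
      · exact hh
      · exact absurd (Fin.ext hh) hine
      · exfalso
        have h1 : Rk x ((i : ℕ) + 1) ((z i : ℕ) + 1)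
            = Rk x ((i : ℕ)) ((z i : ℕ) + 1) := by
          rw [Rk, Rk, cnt_succ' hi_lt]
          simp only [Fin.eta]
          rw [if_neg (by omega)]
          omega
        have h2 : Rk z ((i : ℕ) + 1) ((z i : ℕ) + 1)
            = Rk z ((i : ℕ)) ((z i : ℕ) + 1) + 1 := by
          rw [Rk, Rk, cnt_succ' hi_lt]
          simp only [Fin.eta]
          rw [if_pos (by omega)]
        have h3 := hle ((i : ℕ) + 1) ((z i : ℕ) + 1)
        have h4 := hRpre ((i : ℕ)) ((z i : ℕ) + 1) (le_refl _)
        omega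
    -- find j
    have hJne : (Finset.univ.filter (fun k : Fin n =>
        (i : ℕ) < (k : ℕ) ∧ ((x i : ℕ)) < ((x k : ℕ)) ∧ ((x k : ℕ)) ≤ ((z i : ℕ)))).Nonempty := by
      refine ⟨x⁻¹ (z i), Finset.mem_filter.mpr ⟨Finset.mem_univ _, ?_, ?_, ?_⟩⟩
      · -- i < x⁻¹ (z i)
        have h1 : x (x⁻¹ (z i)) = z i := x.apply_inv_self _
        rcases lt_trichotomy ((i : ℕ)) ((x⁻¹ (z i) : Fin n) : ℕ) with hh | hh | hh
        · exact hh
        · exfalso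
          have : x⁻¹ (z i) = i := Fin.ext hh.symm
          rw [this] at h1
          exact hine h1
        · exfalso
          have h2 := hprefix (x⁻¹ (z i)) hh
          rw [h1] at h2
          have : x⁻¹ (z i) = i := z.injective h2.symm
          rw [this] at hh
          omega
      · rw [x.apply_inv_self]; exact hac
      · rw [x.apply_inv_self]
    set j := (Finset.univ.filter (fun k : Fin n =>
        (i : ℕ) < (k : ℕ) ∧ ((x i : ℕ)) < ((x k : ℕ)) ∧ ((x k : ℕ)) ≤ ((z i : ℕ)))).min' hJne
      with hj
    have hjmem := (Finset.univ.filter (fun k : Fin n =>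
        (i : ℕ) < (k : ℕ) ∧ ((x i : ℕ)) < ((x k : ℕ)) ∧ ((x k : ℕ)) ≤ ((z i : ℕ)))).min'_mem hJne
    rw [← hj, Finset.mem_filter] at hjmem
    obtain ⟨-, hij, hab', hbc⟩ := hjmem
    have hjmin : ∀ k : Fin n, (i : ℕ) < (k : ℕ) → (k : ℕ) < (j : ℕ) →
        ¬ (((x i : ℕ)) < ((x k : ℕ)) ∧ ((x k : ℕ)) ≤ ((z i : ℕ))) := by
      intro k hik hkj hcon
      have hmem : k ∈ Finset.univ.filter (fun k : Fin n =>
          (i : ℕ) < (k : ℕ) ∧ ((x i : ℕ)) < ((x k : ℕ)) ∧ ((x k : ℕ)) ≤ ((z i : ℕ))) :=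
        Finset.mem_filter.mpr ⟨Finset.mem_univ _, hik, hcon.1, hcon.2⟩
      have := Finset.min'_le _ k hmem
      rw [← hj, Fin.le_def] at this
      omega
    -- the step
    set a := x i with ha
    set b := x j with hb
    set x' := Equiv.swap a b * x with hx'
    have habne : a ≠ b := fun hh => by rw [hh] at hab'; omega
    have hstep : ∃ t : Perm (Fin n), t.IsSwap ∧ x' = t * x ∧
        permLength x < permLength x' := by
      refine ⟨Equiv.swap a b, ⟨a, b, habne, rfl⟩, rfl, ?_⟩
      rw [permLength_eq, permLength_eq]
      have h9 := (invc_swap_facts hab' hij rfl rfl).1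
      rw [← hx'] at h9
      omega
    -- R z ≤ R x'
    have hle' : ∀ m w : ℕ, Rk z m w ≤ Rk x' m w := by
      intro m w
      have hmaster := Rk_swap hab' hij rfl rfl m w
      by_cases hrect : (i : ℕ) < m ∧ ¬ (j : ℕ) < m ∧ ((a : ℕ)) < w ∧ ¬ ((b : ℕ)) < w
      · -- in the rectangle : show Rk z m w + 1 ≤ Rk x m w
        obtain ⟨hm1, hm2, hw1, hw2⟩ := hrect
        have key : Rk z m w + 1 ≤ Rk x m w := by
          have d1 : Rk x m w = Rk x ((i : ℕ)) w
              + cnt (fun k => (i:ℕ) ≤ (k:ℕ) ∧ (k:ℕ) < m ∧ ((x k : ℕ)) < w) :=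
            Rk_split x (by omega) w
          have d2 : Rk z m w = Rk z ((i : ℕ)) w
              + cnt (fun k => (i:ℕ) ≤ (k:ℕ) ∧ (k:ℕ) < m ∧ ((z k : ℕ)) < w) :=
            Rk_split z (by omega) w
          have d3 : Rk x m ((z i : ℕ) + 1) = Rk x ((i : ℕ)) ((z i : ℕ) + 1)
              + cnt (fun k => (i:ℕ) ≤ (k:ℕ) ∧ (k:ℕ) < m ∧ ((x k : ℕ)) < (z i : ℕ) + 1) :=
            Rk_split x (by omega) _
          have d4 : Rk z m ((z i : ℕ) + 1) = Rk z ((i : ℕ)) ((z i : ℕ) + 1)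
              + cnt (fun k => (i:ℕ) ≤ (k:ℕ) ∧ (k:ℕ) < m ∧ ((z k : ℕ)) < (z i : ℕ) + 1) :=
            Rk_split z (by omega) _
          -- split off k = i
          have sp : ∀ (y : Perm (Fin n)) (v : ℕ),
              cnt (fun k : Fin n => (i:ℕ) ≤ (k:ℕ) ∧ (k:ℕ) < m ∧ ((y k : ℕ)) < v)
              = cnt (fun k : Fin n => (i:ℕ) < (k:ℕ) ∧ (k:ℕ) < m ∧ ((y k : ℕ)) < v)
                + (if ((y i : ℕ)) < v then 1 else 0) := by
            intro y v
            rw [cnt_split (fun k : Fin n => (i:ℕ) ≤ (k:ℕ) ∧ (k:ℕ) < m ∧ ((y k : ℕ)) < v)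
              (fun k => (i:ℕ) < (k:ℕ))]
            congr 1
            · refine cnt_congr fun k => ?_
              constructor
              · rintro ⟨⟨_, h2, h3⟩, h4⟩; exact ⟨h4, h2, h3⟩
              · rintro ⟨h1, h2, h3⟩; exact ⟨⟨by omega, h2, h3⟩, h1⟩
            · have heq : ∀ k : Fin n,
                  (((i:ℕ) ≤ (k:ℕ) ∧ (k:ℕ) < m ∧ ((y k : ℕ)) < v) ∧ ¬ (i:ℕ) < (k:ℕ))
                  ↔ (k = i ∧ ((y k : ℕ)) < v) := by
                intro k
                constructor
                · rintro ⟨⟨h1, h2, h3⟩, h4⟩; exact ⟨Fin.ext (by omega), h3⟩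
                · rintro ⟨hk, h3⟩; subst hk; exact ⟨⟨le_refl _, by omega, h3⟩, by omega⟩
              rw [cnt_congr heq, cnt_point]
              split_ifs <;> rfl
          -- mid counts conversion for x : entries in (i,m) avoid (a, zi]
          have hmidx : cnt (fun k : Fin n => (i:ℕ) < (k:ℕ) ∧ (k:ℕ) < m ∧ ((x k : ℕ)) < w)
              = cnt (fun k : Fin n => (i:ℕ) < (k:ℕ) ∧ (k:ℕ) < m ∧ ((x k : ℕ)) < (z i : ℕ) + 1) := by
            refine cnt_congr fun k => ?_
            constructor
            · rintro ⟨h1, h2, h3⟩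
              refine ⟨h1, h2, ?_⟩
              omega
            · rintro ⟨h1, h2, h3⟩
              refine ⟨h1, h2, ?_⟩
              have hnk := hjmin k h1 (by omega)
              omega
          -- mid counts monotone for z
          have hmidz : cnt (fun k : Fin n => (i:ℕ) < (k:ℕ) ∧ (k:ℕ) < m ∧ ((z k : ℕ)) < w)
              ≤ cnt (fun k : Fin n => (i:ℕ) < (k:ℕ) ∧ (k:ℕ) < m ∧ ((z k : ℕ)) < (z i : ℕ) + 1) := by
            refine cnt_le fun k => ?_
            rintro ⟨h1, h2, h3⟩; exact ⟨h1, h2, by omega⟩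
          have hpre1 := hRpre ((i : ℕ)) w (le_refl _)
          have hpre2 := hRpre ((i : ℕ)) ((z i : ℕ) + 1) (le_refl _)
          have hhyp := hle m ((z i : ℕ) + 1)
          have spx1 := sp x w
          have spz1 := sp z w
          have spx2 := sp x ((z i : ℕ) + 1)
          have spz2 := sp z ((z i : ℕ) + 1)
          have haa : (x i : ℕ) = (a : ℕ) := by rw [ha]
          rw [if_pos (show ((x i : ℕ)) < w by omega)] at spx1
          rw [if_neg (show ¬ ((z i : ℕ)) < w by omega)] at spz1
          rw [if_pos (show ((x i : ℕ)) < (z i : ℕ) + 1 by omega)] at spx2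
          rw [if_pos (show ((z i : ℕ)) < (z i : ℕ) + 1 by omega)] at spz2
          omega
        rw [if_pos (by omega : (i : ℕ) < m ∧ ¬ (j : ℕ) < m ∧ ((a : ℕ)) < w ∧ ¬ ((b : ℕ)) < w)] at hmaster
        rw [hx']
        omega
      · rw [if_neg hrect, add_zero] at hmaster
        rw [hx', hmaster]
        exact hle m w
    by_cases hxz : x' = z
    · rw [← hxz]
      exact Relation.TransGen.single hstep
    · -- measure decreases
      have hlt : Mgrid x' z < Mgrid x z := by
        rw [Mgrid, Mgrid]
        refine Finset.sum_lt_sum ?_ ?_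
        · intro p _
          have h1 : Rk x' p.1 p.2 ≤ Rk x p.1 p.2 := by
            rw [hx']; exact Rk_swap_le hab' hij rfl rfl p.1 p.2
          have h2 := hle' p.1 p.2
          have h3 := hle p.1 p.2
          omega
        · refine ⟨((i : ℕ) + 1, (a : ℕ) + 1), ?_, ?_⟩
          · rw [Finset.mem_product]
            constructor <;> rw [Finset.mem_range]
            · omega
            · have := a.is_lt; omega
          · have h1 : Rk x' ((i : ℕ) + 1) ((a : ℕ) + 1) < Rk x ((i : ℕ) + 1) ((a : ℕ) + 1) := by
              rw [hx']; exact Rk_swap_lt hab' hij rfl rfl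
            have h2 := hle' ((i : ℕ) + 1) ((a : ℕ) + 1)
            have h3 := hle ((i : ℕ) + 1) ((a : ℕ) + 1)
            simp only []
            omega
      have hbr := ih (Mgrid x' z) (by omega) x' z hle' hxz rfl
      exact Relation.TransGen.head (by exact hstep) hbr

lemma bruhatLT_iff_Rk {x z : Perm (Fin n)} :
    BruhatLT x z ↔ (x ≠ z ∧ ∀ m w : ℕ, Rk z m w ≤ Rk x m w) := by
  constructor
  · intro h
    have h2 := bruhatLT_Rk h
    refine ⟨fun hh => ?_, h2.1⟩
    rw [hh] at h2
    omega
  · rintro ⟨hne, hle⟩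
    exact bruhatLT_of_Rk (Mgrid x z) x z hle hne rfl

end bruhat

section comb

variable {α β γ : Partn} {n : ℕ}

lemma psum_mono (α : Partn) : Monotone (psum α) := by
  intro u u' h
  exact Finset.sum_le_sum_of_subset (Finset.range_subset_range.mpr h)

lemma psum_succ (α : Partn) (u : ℕ) : psum α (u + 1) = psum α u + α.f u :=
  Finset.sum_range_succ _ _

lemma psum_le_n (hn : PartnOf α n) : ∀ u, psum α u ≤ n := by
  obtain ⟨N, hN0, hNs⟩ := hn
  intro u
  by_cases h : u ≤ N
  · calc psum α u ≤ psum α N := psum_mono α h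
    _ = n := hNs
  · have : psum α u = psum α N := by
      rw [psum, psum]
      refine (Finset.sum_subset (Finset.range_subset_range.mpr (by omega)) ?_).symm
      intro i hi hni
      exact hN0 i (by simp [Finset.mem_range] at hni ⊢; omega)
    rw [this]; exact le_of_eq hNs

lemma psum_big (hn : PartnOf α n) : ∃ N, psum α N = n := by
  obtain ⟨N, hN0, hNs⟩ := hn
  exact ⟨N, hNs⟩

lemma blockIdx_le_iff (hn : PartnOf α n) {v : ℕ} (hv : v < n) (u : ℕ) :
    blockIdx α v ≤ u ↔ v < psum α u := by
  obtain ⟨N, hNs⟩ := psum_big hn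
  have hne : v ∈ {u | v < psum α u} → True := fun _ => trivial
  have hmem : blockIdx α v ∈ {u | v < psum α u} := by
    refine Nat.sInf_mem ⟨N, ?_⟩
    simp only [Set.mem_setOf_eq, hNs]
    exact hv
  constructor
  · intro h
    calc v < psum α (blockIdx α v) := hmem
    _ ≤ psum α u := psum_mono α h
  · intro h
    exact Nat.sInf_le h

lemma blockIdx_pos (hn : PartnOf α n) {v : ℕ} (hv : v < n) : 1 ≤ blockIdx α v := by
  by_contra h
  have h0 : blockIdx α v = 0 := by omega
  have := (blockIdx_le_iff hn hv 0).mp (by omega)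
  simp [psum] at this

lemma blockIdx_eq_iff (hn : PartnOf α n) {v : ℕ} (hv : v < n) {u : ℕ} (hu : 1 ≤ u) :
    blockIdx α v = u ↔ (psum α (u - 1) ≤ v ∧ v < psum α u) := by
  constructor
  · intro h
    constructor
    · by_contra hh
      have h2 : v < psum α (u - 1) := by omega
      have := (blockIdx_le_iff hn hv (u - 1)).mpr h2
      omega
    · exact (blockIdx_le_iff hn hv u).mp (by omega)
  · rintro ⟨h1, h2⟩
    have h3 : blockIdx α v ≤ u := (blockIdx_le_iff hn hv u).mpr h2
    have h4 : ¬ (blockIdx α v ≤ u - 1) := by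
      intro hh
      have := (blockIdx_le_iff hn hv (u - 1)).mp hh
      omega
    omega

/-- structure of cells of a rook strip (only uses the vertical strip property). -/
lemma cell_iff (hv : VertStrip β γ) (i j : ℕ) :
    (i, j) ∈ SkewCells β γ ↔ (γ.f i < β.f i ∧ j = γ.f i) := by
  have := hv i
  constructor
  · rintro ⟨h1, h2⟩
    simp only at h1 h2
    constructor <;> omega
  · rintro ⟨h1, h2⟩
    exact ⟨by simp; omega, by simp; omega⟩

open scoped Classical in
lemma regionRow_eq (hv : VertStrip β γ) (F : SkFilling α β γ) (u i : ℕ) :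
    regionRow F u i = γ.f i +
      (if ((i, γ.f i) ∈ SkewCells β γ ∧ F.entry (i, γ.f i) ≤ u) then 1 else 0) := by
  rw [regionRow]
  congr 1
  have hset : {j | (i, j) ∈ SkewCells β γ ∧ F.entry (i, j) ≤ u} =
      if ((i, γ.f i) ∈ SkewCells β γ ∧ F.entry (i, γ.f i) ≤ u) then {γ.f i} else (∅ : Set ℕ) := by
    ext j
    split_ifs with h
    · simp only [Set.mem_setOf_eq, Set.mem_singleton_iff]
      constructor
      · rintro ⟨h1, h2⟩
        exact ((cell_iff hv i j).mp h1).2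
      · rintro rfl
        exact h
    · simp only [Set.mem_setOf_eq, Set.mem_empty_iff_false, iff_false]
      rintro ⟨h1, h2⟩
      have := (cell_iff hv i j).mp h1
      exact h (by rw [← this.2]; exact ⟨h1, h2⟩)
  rw [hset]
  split_ifs <;> simp

end comb

section readlem

variable {α β γ : Partn} {n : ℕ}

open scoped Classical

lemma row_lt_iff {e : Fin n → ℕ × ℕ} (he : IsRowRead β γ e) (k l : Fin n) :
    (k : ℕ) < (l : ℕ) ↔ (e k).1 < (e l).1 := by
  constructor
  · intro h
    exact he.2.2.2 k l (Fin.lt_def.mpr h)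
  · intro h
    rcases lt_trichotomy ((k : ℕ)) ((l : ℕ)) with hh | hh | hh
    · exact hh
    · exfalso; rw [Fin.ext hh] at h; omega
    · exfalso
      have := he.2.2.2 l k (Fin.lt_def.mpr hh)
      omega

lemma sum_region (hv : VertStrip β γ) {e : Fin n → ℕ × ℕ} (he : IsRowRead β γ e)
    (F : SkFilling α β γ) (u j : ℕ) :
    ∑ i ∈ Finset.range j, regionRow F u i =
      (∑ i ∈ Finset.range j, γ.f i) +
        cnt (fun k : Fin n => (e k).1 < j ∧ F.entry (e k) ≤ u) := by
  have h1 : ∀ i ∈ Finset.range j, regionRow F u i = γ.f i +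
      (if ((i, γ.f i) ∈ SkewCells β γ ∧ F.entry (i, γ.f i) ≤ u) then 1 else 0) :=
    fun i _ => regionRow_eq hv F u i
  rw [Finset.sum_congr rfl h1, Finset.sum_add_distrib]
  congr 1
  -- card bijection
  have h2 : (∑ i ∈ Finset.range j,
      if ((i, γ.f i) ∈ SkewCells β γ ∧ F.entry (i, γ.f i) ≤ u) then 1 else 0) =
      ((Finset.range j).filter
        (fun i => (i, γ.f i) ∈ SkewCells β γ ∧ F.entry (i, γ.f i) ≤ u)).card := by
    rw [Finset.card_filter]
  have h3 : cnt (fun k : Fin n => (e k).1 < j ∧ F.entry (e k) ≤ u) =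
      (Finset.univ.filter (fun k : Fin n => (e k).1 < j ∧ F.entry (e k) ≤ u)).card := by
    rw [Finset.card_filter, cnt]
    exact Finset.sum_congr rfl fun k _ => by congr
  rw [h2, h3]
  have hcell : ∀ k : Fin n, e k = ((e k).1, γ.f (e k).1) := by
    intro k
    have h4 := he.1 k
    have h5 : ((e k).1, (e k).2) ∈ SkewCells β γ := h4
    have h6 := ((cell_iff hv (e k).1 (e k).2).mp h5).2
    have h7 : e k = ((e k).1, (e k).2) := rfl
    rw [h7, h6]
  symm
  refine Finset.card_bij (fun k _ => (e k).1) ?_ ?_ ?_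
  · intro k hk
    rw [Finset.mem_filter] at hk ⊢
    obtain ⟨-, hk1, hk2⟩ := hk
    refine ⟨Finset.mem_range.mpr hk1, ?_, ?_⟩
    · rw [← hcell k]; exact he.1 k
    · rw [← hcell k]; exact hk2
  · intro k hk k' hk' hkk
    by_contra hne
    rcases lt_trichotomy ((k : ℕ)) ((k' : ℕ)) with hh | hh | hh
    · have := (row_lt_iff he k k').mp hh; omega
    · exact hne (Fin.ext hh)
    · have := (row_lt_iff he k' k).mp hh; omega
  · intro i hi
    rw [Finset.mem_filter, Finset.mem_range] at hi
    obtain ⟨hij, hc1, hc2⟩ := hi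
    obtain ⟨k, hk⟩ := he.2.2.1 (i, γ.f i) hc1
    refine ⟨k, Finset.mem_filter.mpr ⟨Finset.mem_univ _, ?_, ?_⟩, ?_⟩
    · simp [hk]; exact hij
    · simp [hk]; exact hc2
    · simp [hk]

/-- rows below `j` form a downward-closed set of positions. -/
lemma rowsLT_iff {e : Fin n → ℕ × ℕ} (he : IsRowRead β γ e) (j : ℕ) (k : Fin n) :
    (e k).1 < j ↔ (k : ℕ) < cnt (fun l : Fin n => (e l).1 < j) := by
  refine cnt_dc (P := fun l : Fin n => (e l).1 < j) ?_ k
  intro k' l' hkl hl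
  rcases eq_or_lt_of_le hkl with heq | hlt
  · rw [heq]; exact hl
  · have := (row_lt_iff he k' l').mp (Fin.lt_def.mp hlt)
    omega

lemma rowsLT_at {e : Fin n → ℕ × ℕ} (he : IsRowRead β γ e) (m : Fin n) :
    cnt (fun l : Fin n => (e l).1 < (e m).1) = (m : ℕ) := by
  have h1 : cnt (fun l : Fin n => (e l).1 < (e m).1) = cnt (fun l : Fin n => (l : ℕ) < (m : ℕ)) :=
    cnt_congr fun l => (row_lt_iff he l m).symm
  rw [h1, cnt_lt_nat]
  have := m.is_lt
  omega

end readlem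

section stdlem

variable {α β γ : Partn} {n : ℕ}

lemma entry_le_iff (hn : PartnOf α n) {e : Fin n → ℕ × ℕ} {F : SkFilling α β γ}
    {p : Perm (Fin n)} (hp : IsStdOf α F e p) (k : Fin n) (u : ℕ) :
    F.entry (e k) ≤ u ↔ ((p k : ℕ)) < psum α u := by
  rw [← hp.1 k]
  exact (blockIdx_le_iff hn (p k).is_lt u)

lemma entry_eq_iff (hn : PartnOf α n) {e : Fin n → ℕ × ℕ} {F : SkFilling α β γ}
    {p : Perm (Fin n)} (hp : IsStdOf α F e p) (k : Fin n) {u : ℕ} (hu : 1 ≤ u) :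
    F.entry (e k) = u ↔ (psum α (u - 1) ≤ ((p k : ℕ)) ∧ ((p k : ℕ)) < psum α u) := by
  rw [← hp.1 k]
  exact blockIdx_eq_iff hn (p k).is_lt hu

lemma cnt_perm_range (p : Perm (Fin n)) {L w : ℕ} (hLw : L ≤ w) :
    cnt (fun k : Fin n => L ≤ ((p k : ℕ)) ∧ ((p k : ℕ)) < w) = min w n - min L n := by
  have h1 : cnt (fun k : Fin n => L ≤ ((p k : ℕ)) ∧ ((p k : ℕ)) < w)
      = cnt (fun v : Fin n => L ≤ (v : ℕ) ∧ (v : ℕ) < w) :=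
    cnt_perm p (fun v : Fin n => L ≤ (v : ℕ) ∧ (v : ℕ) < w)
  have h2 : cnt (fun v : Fin n => (v : ℕ) < w) =
      cnt (fun v : Fin n => ((v : ℕ) < w) ∧ (v : ℕ) < L)
        + cnt (fun v : Fin n => ((v : ℕ) < w) ∧ ¬ (v : ℕ) < L) :=
    cnt_split _ _
  have h3 : cnt (fun v : Fin n => ((v : ℕ) < w) ∧ (v : ℕ) < L)
      = cnt (fun v : Fin n => (v : ℕ) < L) := cnt_congr fun v => by
    constructor
    · rintro ⟨h1, h2⟩; exact h2
    · intro h; exact ⟨by omega, h⟩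
  have h4 : cnt (fun v : Fin n => ((v : ℕ) < w) ∧ ¬ (v : ℕ) < L)
      = cnt (fun v : Fin n => L ≤ (v : ℕ) ∧ (v : ℕ) < w) := cnt_congr fun v => by
    constructor
    · rintro ⟨h1, h2⟩; exact ⟨by omega, h1⟩
    · rintro ⟨h1, h2⟩; exact ⟨h2, by omega⟩
  have h5 := cnt_lt_nat (n := n) w
  have h6 := cnt_lt_nat (n := n) L
  omega

lemma cnt_val_lt (p : Perm (Fin n)) (w : ℕ) :
    cnt (fun k : Fin n => ((p k : ℕ)) < w) = min w n := by
  have h1 : cnt (fun k : Fin n => ((p k : ℕ)) < w) = cnt (fun v : Fin n => (v : ℕ) < w) :=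
    cnt_perm p (fun v : Fin n => (v : ℕ) < w)
  rw [h1, cnt_lt_nat]

/-- standardization formula: the value at a position is the block start plus the
number of earlier positions with the same entry. -/
lemma std_formula (hn : PartnOf α n) {e : Fin n → ℕ × ℕ} {F : SkFilling α β γ}
    {p : Perm (Fin n)} (hp : IsStdOf α F e p) (k : Fin n) {u : ℕ} (hu : 1 ≤ u)
    (hk : F.entry (e k) = u) :
    ((p k : ℕ)) = psum α (u - 1) +
      cnt (fun l : Fin n => (l : ℕ) < (k : ℕ) ∧ F.entry (e l) = u) := by
  have hblk := (entry_eq_iff hn hp k hu).mp hk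
  have h1 : cnt (fun l : Fin n => psum α (u - 1) ≤ ((p l : ℕ)) ∧ ((p l : ℕ)) < ((p k : ℕ)))
      = min ((p k : ℕ)) n - min (psum α (u - 1)) n := cnt_perm_range p hblk.1
  have h2 : cnt (fun l : Fin n => psum α (u - 1) ≤ ((p l : ℕ)) ∧ ((p l : ℕ)) < ((p k : ℕ)))
      = cnt (fun l : Fin n => (l : ℕ) < (k : ℕ) ∧ F.entry (e l) = u) := by
    refine cnt_congr fun l => ?_
    constructor
    · rintro ⟨hl1, hl2⟩
      have hlu : F.entry (e l) = u := by
        rw [entry_eq_iff hn hp l hu]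
        exact ⟨hl1, by omega⟩
      refine ⟨?_, hlu⟩
      rcases lt_trichotomy ((l : ℕ)) ((k : ℕ)) with hh | hh | hh
      · exact hh
      · exfalso; rw [Fin.ext hh] at hl2; omega
      · exfalso
        have := hp.2 k l (Fin.lt_def.mpr hh) (by rw [hk, hlu])
        rw [Fin.lt_def] at this
        omega
    · rintro ⟨hl1, hl2⟩
      have hblk' := (entry_eq_iff hn hp l hu).mp hl2
      refine ⟨hblk'.1, ?_⟩
      have := hp.2 l k (Fin.lt_def.mpr hl1) (by rw [hk, hl2])
      rw [Fin.lt_def] at this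
      exact this
  have hps := psum_le_n hn (u - 1)
  have hklt := (p k).is_lt
  omega

/-- standardizations are unique. -/
lemma std_unique (hn : PartnOf α n) {e : Fin n → ℕ × ℕ} (he : IsRowRead β γ e)
    {F : SkFilling α β γ} {p p' : Perm (Fin n)}
    (hp : IsStdOf α F e p) (hp' : IsStdOf α F e p') : p = p' := by
  refine Equiv.ext fun k => Fin.ext ?_
  have hu : 1 ≤ F.entry (e k) := F.pos_inside (e k) (he.1 k)
  rw [std_formula hn hp k hu rfl, std_formula hn hp' k hu rfl]

/-- number of entries equal to `u` below position `m`, capped version. -/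
lemma min_formula (hn : PartnOf α n) {e : Fin n → ℕ × ℕ} {F : SkFilling α β γ}
    {p : Perm (Fin n)} (hp : IsStdOf α F e p) {u : ℕ} (hu : 1 ≤ u) {w : ℕ}
    (hLw : psum α (u - 1) ≤ w) (m : ℕ) :
    cnt (fun k : Fin n => (k : ℕ) < m ∧ F.entry (e k) = u ∧ ((p k : ℕ)) < w)
      = min (w - psum α (u - 1)) (cnt (fun k : Fin n => (k : ℕ) < m ∧ F.entry (e k) = u)) := by
  set L := psum α (u - 1) with hL
  set d := w - L with hd
  have hrk : ∀ k : Fin n, F.entry (e k) = u →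
      (((p k : ℕ)) < w ↔ cnt (fun l : Fin n => (l : ℕ) < (k : ℕ) ∧ F.entry (e l) = u) < d) := by
    intro k hk
    rw [std_formula hn hp k hu hk]
    omega
  have hcong : cnt (fun k : Fin n => (k : ℕ) < m ∧ F.entry (e k) = u ∧ ((p k : ℕ)) < w)
      = cnt (fun k : Fin n => (k : ℕ) < m ∧ F.entry (e k) = u ∧
          cnt (fun l : Fin n => (l : ℕ) < (k : ℕ) ∧ F.entry (e l) = u) < d) := by
    refine cnt_congr fun k => ?_
    constructor
    · rintro ⟨h1, h2, h3⟩; exact ⟨h1, h2, (hrk k h2).mp h3⟩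
    · rintro ⟨h1, h2, h3⟩; exact ⟨h1, h2, (hrk k h2).mpr h3⟩
  rw [hcong]
  clear hcong hrk
  -- induction on m
  induction m with
  | zero =>
    have hz1 : cnt (fun k : Fin n => (k : ℕ) < 0 ∧ F.entry (e k) = u ∧
        cnt (fun l : Fin n => (l : ℕ) < (k : ℕ) ∧ F.entry (e l) = u) < d) = 0 := by
      rw [cnt_congr (Q := fun _ : Fin n => False) (fun k => by simp), cnt_false]
    have hz2 : cnt (fun k : Fin n => (k : ℕ) < 0 ∧ F.entry (e k) = u) = 0 := by
      rw [cnt_congr (Q := fun _ : Fin n => False) (fun k => by simp), cnt_false]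
    rw [hz1, hz2]
    omega
  | succ m ih =>
    by_cases hm : m < n
    · rw [cnt_succ' hm, cnt_succ' hm, ih]
      have hval : ((⟨m, hm⟩ : Fin n) : ℕ) = m := rfl
      by_cases hentry : F.entry (e ⟨m, hm⟩) = u
      · by_cases hrank : cnt (fun l : Fin n => (l : ℕ) < m ∧ F.entry (e l) = u) < d
        · rw [if_pos ⟨hentry, by rw [hval]; exact hrank⟩, if_pos hentry]
          omega
        · rw [if_neg (by rw [hval]; exact fun hh => hrank hh.2), if_pos hentry]
          omega
      · rw [if_neg (fun hh => hentry hh.1), if_neg hentry]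
        omega
    · rw [cnt_stable (by omega), cnt_stable (by omega), ih]

/-- rank decomposition at an intermediate threshold. -/
lemma Rk_decomp (hn : PartnOf α n) {e : Fin n → ℕ × ℕ} {F : SkFilling α β γ}
    {p : Perm (Fin n)} (hp : IsStdOf α F e p) {u : ℕ} (hu : 1 ≤ u) {w : ℕ}
    (hLw : psum α (u - 1) ≤ w) (hwU : w ≤ psum α u) (m : ℕ) :
    Rk p m w = Rk p m (psum α (u - 1)) +
      cnt (fun k : Fin n => (k : ℕ) < m ∧ F.entry (e k) = u ∧ ((p k : ℕ)) < w) := by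
  rw [Rk, cnt_split (fun k : Fin n => (k : ℕ) < m ∧ ((p k : ℕ)) < w)
    (fun k => ((p k : ℕ)) < psum α (u - 1))]
  congr 1
  · refine cnt_congr fun k => ?_
    constructor
    · rintro ⟨⟨h1, h2⟩, h3⟩; exact ⟨h1, h3⟩
    · rintro ⟨h1, h2⟩; exact ⟨⟨h1, by omega⟩, h2⟩
  · refine cnt_congr fun k => ?_
    constructor
    · rintro ⟨⟨h1, h2⟩, h3⟩
      refine ⟨h1, ?_, h2⟩
      rw [entry_eq_iff hn hp k hu]
      exact ⟨by omega, by omega⟩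
    · rintro ⟨h1, h2, h3⟩
      have := (entry_eq_iff hn hp k hu).mp h2
      exact ⟨⟨h1, h3⟩, by omega⟩

/-- boundary inequalities interpolate to all thresholds. -/
lemma interp (hn : PartnOf α n) {e : Fin n → ℕ × ℕ}
    {X Z : SkFilling α β γ} {px pz : Perm (Fin n)}
    (hpx : IsStdOf α X e px) (hpz : IsStdOf α Z e pz)
    (hb : ∀ m u : ℕ, Rk pz m (psum α u) ≤ Rk px m (psum α u)) :
    ∀ m w : ℕ, Rk pz m w ≤ Rk px m w := by
  intro m w
  by_cases hw : n ≤ w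
  · rw [Rk_big px hw, Rk_big pz hw]
  · push_neg at hw
    set u := blockIdx α w with hu
    have hu1 : 1 ≤ u := blockIdx_pos hn hw
    have hLU : psum α (u - 1) ≤ w ∧ w < psum α u := by
      rw [hu]
      exact (blockIdx_eq_iff hn hw hu1).mp rfl
    have hUw : w ≤ psum α u := by omega
    have hx := Rk_decomp hn hpx hu1 hLU.1 hUw m
    have hz := Rk_decomp hn hpz hu1 hLU.1 hUw m
    have hxm := min_formula hn hpx hu1 hLU.1 m
    have hzm := min_formula hn hpz hu1 hLU.1 m
    -- at the upper boundary
    have hxU := Rk_decomp hn hpx hu1 (le_of_lt (by omega : psum α (u-1) < psum α u)) (le_refl _) m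
    have hzU := Rk_decomp hn hpz hu1 (le_of_lt (by omega : psum α (u-1) < psum α u)) (le_refl _) m
    have hxmU := min_formula hn hpx hu1 (le_of_lt (by omega : psum α (u-1) < psum α u)) (w := psum α u) m
    have hzmU := min_formula hn hpz hu1 (le_of_lt (by omega : psum α (u-1) < psum α u)) (w := psum α u) m
    -- total entry counts are at most the block size
    have hcapx : cnt (fun k : Fin n => (k : ℕ) < m ∧ X.entry (e k) = u) ≤ psum α u - psum α (u - 1) := by
      have h1 : cnt (fun k : Fin n => (k : ℕ) < m ∧ X.entry (e k) = u)
          ≤ cnt (fun k : Fin n => psum α (u-1) ≤ ((px k : ℕ)) ∧ ((px k : ℕ)) < psum α u) := by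
        refine cnt_le fun k => ?_
        rintro ⟨h1, h2⟩
        exact (entry_eq_iff hn hpx k hu1).mp h2
      rw [cnt_perm_range px (psum_mono α (by omega))] at h1
      have := psum_le_n hn u
      have := psum_le_n hn (u - 1)
      omega
    have hcapz : cnt (fun k : Fin n => (k : ℕ) < m ∧ Z.entry (e k) = u) ≤ psum α u - psum α (u - 1) := by
      have h1 : cnt (fun k : Fin n => (k : ℕ) < m ∧ Z.entry (e k) = u)
          ≤ cnt (fun k : Fin n => psum α (u-1) ≤ ((pz k : ℕ)) ∧ ((pz k : ℕ)) < psum α u) := by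
        refine cnt_le fun k => ?_
        rintro ⟨h1, h2⟩
        exact (entry_eq_iff hn hpz k hu1).mp h2
      rw [cnt_perm_range pz (psum_mono α (by omega))] at h1
      have := psum_le_n hn u
      have := psum_le_n hn (u - 1)
      omega
    have hbL := hb m (u - 1)
    have hbU := hb m u
    omega

end stdlem

section final

variable {α β γ : Partn} {n : ℕ}

lemma dom_to_counts (hv : VertStrip β γ) {e : Fin n → ℕ × ℕ} (he : IsRowRead β γ e)
    (hn : PartnOf α n) {X Z : SkFilling α β γ} {px pz : Perm (Fin n)}
    (hpx : IsStdOf α X e px) (hpz : IsStdOf α Z e pz)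
    (hdom : DomLE Z X) (u m : ℕ) (hm : m ≤ n) :
    cnt (fun k : Fin n => (k : ℕ) < m ∧ Z.entry (e k) ≤ u)
      ≤ cnt (fun k : Fin n => (k : ℕ) < m ∧ X.entry (e k) ≤ u) := by
  rcases lt_or_eq_of_le hm with hmlt | hmeq
  · set j := (e ⟨m, hmlt⟩).1 with hj
    have h := hdom u j
    rw [sum_region hv he X u j, sum_region hv he Z u j] at h
    have hcount : cnt (fun l : Fin n => (e l).1 < j) = m := rowsLT_at he ⟨m, hmlt⟩
    have hiff : ∀ k : Fin n, (e k).1 < j ↔ (k : ℕ) < m := by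
      intro k
      rw [rowsLT_iff he j k, hcount]
    have hZ : cnt (fun k : Fin n => (e k).1 < j ∧ Z.entry (e k) ≤ u)
        = cnt (fun k : Fin n => (k : ℕ) < m ∧ Z.entry (e k) ≤ u) :=
      cnt_congr fun k => by rw [hiff k]
    have hX : cnt (fun k : Fin n => (e k).1 < j ∧ X.entry (e k) ≤ u)
        = cnt (fun k : Fin n => (k : ℕ) < m ∧ X.entry (e k) ≤ u) :=
      cnt_congr fun k => by rw [hiff k]
    omega
  · have hZ : cnt (fun k : Fin n => (k : ℕ) < m ∧ Z.entry (e k) ≤ u)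
        = min (psum α u) n := by
      rw [cnt_ge_all (le_of_eq hmeq.symm)]
      rw [cnt_congr (Q := fun k : Fin n => ((pz k : ℕ)) < psum α u)
        (fun k => entry_le_iff hn hpz k u)]
      exact cnt_val_lt pz (psum α u)
    have hX : cnt (fun k : Fin n => (k : ℕ) < m ∧ X.entry (e k) ≤ u)
        = min (psum α u) n := by
      rw [cnt_ge_all (le_of_eq hmeq.symm)]
      rw [cnt_congr (Q := fun k : Fin n => ((px k : ℕ)) < psum α u)
        (fun k => entry_le_iff hn hpx k u)]
      exact cnt_val_lt px (psum α u)
    omega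

lemma counts_to_dom (hv : VertStrip β γ) {e : Fin n → ℕ × ℕ} (he : IsRowRead β γ e)
    {X Z : SkFilling α β γ}
    (hc : ∀ u m : ℕ, m ≤ n →
      cnt (fun k : Fin n => (k : ℕ) < m ∧ Z.entry (e k) ≤ u)
        ≤ cnt (fun k : Fin n => (k : ℕ) < m ∧ X.entry (e k) ≤ u)) :
    DomLE Z X := by
  intro u j
  rw [sum_region hv he X u j, sum_region hv he Z u j]
  have hm : cnt (fun l : Fin n => (e l).1 < j) ≤ n := cnt_le_n _
  have hZ : cnt (fun k : Fin n => (e k).1 < j ∧ Z.entry (e k) ≤ u)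
      = cnt (fun k : Fin n => (k : ℕ) < cnt (fun l : Fin n => (e l).1 < j) ∧ Z.entry (e k) ≤ u) :=
    cnt_congr fun k => by rw [rowsLT_iff he j k]
  have hX : cnt (fun k : Fin n => (e k).1 < j ∧ X.entry (e k) ≤ u)
      = cnt (fun k : Fin n => (k : ℕ) < cnt (fun l : Fin n => (e l).1 < j) ∧ X.entry (e k) ≤ u) :=
    cnt_congr fun k => by rw [rowsLT_iff he j k]
  have := hc u (cnt (fun l : Fin n => (e l).1 < j)) hm
  omega

lemma counts_to_boundary (hn : PartnOf α n) {e : Fin n → ℕ × ℕ}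
    {X Z : SkFilling α β γ} {px pz : Perm (Fin n)}
    (hpx : IsStdOf α X e px) (hpz : IsStdOf α Z e pz)
    (hc : ∀ u m : ℕ, m ≤ n →
      cnt (fun k : Fin n => (k : ℕ) < m ∧ Z.entry (e k) ≤ u)
        ≤ cnt (fun k : Fin n => (k : ℕ) < m ∧ X.entry (e k) ≤ u)) :
    ∀ m u : ℕ, Rk pz m (psum α u) ≤ Rk px m (psum α u) := by
  have key : ∀ m ≤ n, ∀ u : ℕ, Rk pz m (psum α u) ≤ Rk px m (psum α u) := by
    intro m hm u
    have hZ : Rk pz m (psum α u)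
        = cnt (fun k : Fin n => (k : ℕ) < m ∧ Z.entry (e k) ≤ u) := by
      rw [Rk]
      exact cnt_congr fun k => by rw [entry_le_iff hn hpz k u]
    have hX : Rk px m (psum α u)
        = cnt (fun k : Fin n => (k : ℕ) < m ∧ X.entry (e k) ≤ u) := by
      rw [Rk]
      exact cnt_congr fun k => by rw [entry_le_iff hn hpx k u]
    rw [hZ, hX]
    exact hc u m hm
  intro m u
  by_cases hm : m ≤ n
  · exact key m hm u
  · rw [Rk_stable px (by omega), Rk_stable pz (by omega)]
    exact key n (le_refl n) u

lemma filling_eq_of_perm_eq {e : Fin n → ℕ × ℕ} (he : IsRowRead β γ e)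
    {X Z : SkFilling α β γ} {px pz : Perm (Fin n)}
    (hpx : IsStdOf α X e px) (hpz : IsStdOf α Z e pz) (h : px = pz) : X = Z := by
  have hent : X.entry = Z.entry := by
    funext c
    by_cases hc : c ∈ SkewCells β γ
    · obtain ⟨k, hk⟩ := he.2.2.1 c hc
      rw [← hk, ← hpx.1 k, ← hpz.1 k, h]
    · rw [X.zero_outside c hc, Z.zero_outside c hc]
  obtain ⟨xe, xh1, xh2, xh3⟩ := X
  obtain ⟨ze, zh1, zh2, zh3⟩ := Z
  simp only at hent
  subst hent
  rfl

theorem stmt7' (n : ℕ) (α β γ : Partn) (hsub : PartnSub γ β) (hrook : RookStrip β γ)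
    (hn : PartnOf α n) (e : Fin n → ℕ × ℕ) (he : IsRowRead β γ e)
    (X Z : SkFilling α β γ) (px pz : Perm (Fin n))
    (hpx : IsStdOf α X e px) (hpz : IsStdOf α Z e pz) :
    (DomLE Z X ∧ Z ≠ X) ↔ BruhatLT px pz := by
  have hv : VertStrip β γ := hrook.1
  constructor
  · rintro ⟨hdom, hne⟩
    have hc := fun u m hm => dom_to_counts hv he hn hpx hpz hdom u m hm
    have hb := counts_to_boundary hn hpx hpz hc
    have hR := interp hn hpx hpz hb
    have hpne : px ≠ pz := by
      intro h
      exact hne (filling_eq_of_perm_eq he hpx hpz h).symm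
    exact bruhatLT_iff_Rk.mpr ⟨hpne, hR⟩
  · intro hbr
    obtain ⟨hpne, hR⟩ := bruhatLT_iff_Rk.mp hbr
    have hc : ∀ u m : ℕ, m ≤ n →
        cnt (fun k : Fin n => (k : ℕ) < m ∧ Z.entry (e k) ≤ u)
          ≤ cnt (fun k : Fin n => (k : ℕ) < m ∧ X.entry (e k) ≤ u) := by
      intro u m hm
      have hZ : Rk pz m (psum α u)
          = cnt (fun k : Fin n => (k : ℕ) < m ∧ Z.entry (e k) ≤ u) := by
        rw [Rk]
        exact cnt_congr fun k => by rw [entry_le_iff hn hpz k u]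
      have hX : Rk px m (psum α u)
          = cnt (fun k : Fin n => (k : ℕ) < m ∧ X.entry (e k) ≤ u) := by
        rw [Rk]
        exact cnt_congr fun k => by rw [entry_le_iff hn hpx k u]
      have := hR m (psum α u)
      omega
    refine ⟨counts_to_dom hv he hc, ?_⟩
    intro h
    subst h
    exact hpne (std_unique hn he hpx hpz)

end final

/-- for fillings of a rook strip, `Z <_dom X` iff
`π(X) < π(Z)` in the Bruhat order. -/
theorem stmt7 (n : ℕ) (α β γ : Partn) (hsub : PartnSub γ β) (hrook : RookStrip β γ)
    (hn : PartnOf α n) (e : Fin n → ℕ × ℕ) (he : IsRowRead β γ e)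
    (X Z : SkFilling α β γ) (px pz : Perm (Fin n))
    (hpx : IsStdOf α X e px) (hpz : IsStdOf α Z e pz) :
    (DomLE Z X ∧ Z ≠ X) ↔ BruhatLT px pz :=
  stmt7' n α β γ hsub hrook hn e he X Z px pz hpx hpz
end

section
/- Let β∖γ be a rook strip and α a partition of n, and let L ⊆ Sₙ be the set of permutations corresponding (via π) to LR-fillings of shape β∖γ with content α. If x ⋖ z is a covering relation in the Bruhat order with x, z ∈ L, then the LR-filling corresponding to z is obtained from the LR-filling corresponding to x by a single decreasing box move. -/
open Equiv

namespace Stmt9Aux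

variable {n : ℕ}

def invF (x : Perm (Fin n)) : Finset (Fin n × Fin n) :=
  Finset.univ.filter fun c => c.1 < c.2 ∧ x c.2 < x c.1

lemma mem_invF {x : Perm (Fin n)} {c : Fin n × Fin n} :
    c ∈ invF x ↔ c.1 < c.2 ∧ x c.2 < x c.1 := by simp [invF]

def invC (x : Perm (Fin n)) : ℕ := (invF x).card

lemma swap_lt_swap_iff {a b v w : Fin n} (hab : a < b)
    (h1 : ¬(v = a ∧ w = b)) (h2 : ¬(v = b ∧ w = a))
    (hadj : (b : ℕ) = (a : ℕ) + 1) :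
    (Equiv.swap a b w < Equiv.swap a b v ↔ w < v) := by
  simp only [Equiv.swap_apply_def]
  simp only [Fin.ext_iff, not_and] at h1 h2
  have hab' : (a : ℕ) < b := hab
  split_ifs <;> simp only [Fin.lt_def, Fin.ext_iff] at * <;> omega


lemma invC_one : invC (1 : Perm (Fin n)) = 0 := by
  simp only [invC, Finset.card_eq_zero, invF]
  ext c; simp only [Finset.mem_filter, Finset.mem_univ, true_and, Finset.notMem_empty,
    iff_false, not_and, Perm.one_apply]
  exact fun h => by have h := (Finset.mem_filter.mp h).2; exact not_lt_of_gt h.1 h.2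

def sortPair (p q : Fin n) : Fin n × Fin n := if p < q then (p, q) else (q, p)

lemma invF_swap_subset {a b : Fin n} (hab : a < b) (hadj : (b : ℕ) = (a : ℕ) + 1)
    (x : Perm (Fin n)) :
    invF (Equiv.swap a b * x) ⊆ insert (sortPair (x⁻¹ a) (x⁻¹ b)) (invF x) := by
  intro c hc
  rw [mem_invF] at hc
  obtain ⟨hc1, hc2⟩ := hc
  simp only [Perm.mul_apply] at hc2
  by_cases h1 : x c.1 = a ∧ x c.2 = b
  · -- then c.2 = x⁻¹ b, c.1 = x⁻¹ a; sortPair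
    have e1 : c.1 = x⁻¹ a := by rw [← h1.1]; simp
    have e2 : c.2 = x⁻¹ b := by rw [← h1.2]; simp
    have : sortPair (x⁻¹ a) (x⁻¹ b) = c := by
      rw [sortPair, ← e1, ← e2, if_pos hc1]
    rw [this]; simp
  · by_cases h2 : x c.1 = b ∧ x c.2 = a
    · have e1 : c.1 = x⁻¹ b := by rw [← h2.1]; simp
      have e2 : c.2 = x⁻¹ a := by rw [← h2.2]; simp
      have : sortPair (x⁻¹ a) (x⁻¹ b) = c := by
        rw [sortPair, ← e1, ← e2, if_neg (by simp [not_lt, le_of_lt hc1])]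
    -- need: ¬ (x⁻¹ a < x⁻¹ b) i.e. ¬ (c.2 < c.1): true since c.1 < c.2
      rw [this]; simp
    · apply Finset.mem_insert_of_mem
      rw [mem_invF]
      refine ⟨hc1, ?_⟩
      rw [← swap_lt_swap_iff hab h1 h2 hadj]
      exact hc2

lemma invC_swap_le {a b : Fin n} (hab : a < b) (hadj : (b : ℕ) = (a : ℕ) + 1)
    (x : Perm (Fin n)) : invC (Equiv.swap a b * x) ≤ invC x + 1 := by
  calc invC (Equiv.swap a b * x) ≤ (insert (sortPair (x⁻¹ a) (x⁻¹ b)) (invF x)).card :=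
        Finset.card_le_card (invF_swap_subset hab hadj x)
    _ ≤ invC x + 1 := Finset.card_insert_le _ _

lemma invC_swap_lt {a b : Fin n} (hab : a < b) (hadj : (b : ℕ) = (a : ℕ) + 1)
    (x : Perm (Fin n)) (hd : x⁻¹ b < x⁻¹ a) : invC (Equiv.swap a b * x) < invC x := by
  have hsp : sortPair (x⁻¹ a) (x⁻¹ b) = (x⁻¹ b, x⁻¹ a) := by
    rw [sortPair, if_neg (not_lt.mpr (le_of_lt hd))]
  have hPmem : (x⁻¹ b, x⁻¹ a) ∈ invF x := by
    rw [mem_invF]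
    exact ⟨hd, by simp [hab]⟩
  have hPnot : (x⁻¹ b, x⁻¹ a) ∉ invF (Equiv.swap a b * x) := by
    rw [mem_invF]
    simp only [Perm.mul_apply, Perm.inv_def, Equiv.apply_symm_apply, Equiv.swap_apply_left,
      Equiv.swap_apply_right, not_and]
    intro _
    exact not_lt_of_gt hab
  have hsub : invF (Equiv.swap a b * x) ⊆ (invF x).erase (x⁻¹ b, x⁻¹ a) := by
    intro c hc
    have := invF_swap_subset hab hadj x hc
    rw [hsp] at this
    rcases Finset.mem_insert.mp this with rfl | hmem
    · exact absurd hc hPnot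
    · exact Finset.mem_erase.mpr ⟨fun h => hPnot (h ▸ hc), hmem⟩
  calc invC (Equiv.swap a b * x) ≤ ((invF x).erase (x⁻¹ b, x⁻¹ a)).card :=
        Finset.card_le_card hsub
    _ < invC x := Finset.card_erase_lt_of_mem hPmem

lemma strictMono_of_consec {α : Type*} [Preorder α] {f : Fin n → α}
    (h : ∀ i (hi : i + 1 < n), f ⟨i, Nat.lt_of_succ_lt hi⟩ < f ⟨i + 1, hi⟩) :
    StrictMono f := by
  intro k l hkl
  rcases k with ⟨k, hk⟩
  rcases l with ⟨l, hl⟩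
  have hkl' : k < l := hkl
  clear hkl
  induction l with
  | zero => omega
  | succ m ih =>
    rcases Nat.lt_or_ge k m with hm | hm
    · exact lt_trans (ih (Nat.lt_of_succ_lt hl) hm) (h m hl)
    · have hkm : k = m := by omega
      subst hkm
      exact h k hl

lemma eq_one_of_no_descent (x : Perm (Fin n))
    (h : ∀ i (hi : i + 1 < n), x⁻¹ ⟨i, Nat.lt_of_succ_lt hi⟩ < x⁻¹ ⟨i + 1, hi⟩) :
    x = 1 := by
  have hsm : StrictMono (⇑x⁻¹) := strictMono_of_consec h
  have hinv : x⁻¹ = 1 := by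
    have hE : StrictMono.orderIsoOfSurjective (⇑x⁻¹) hsm x⁻¹.surjective
        = OrderIso.refl (Fin n) := Subsingleton.elim _ _
    ext k
    have h2 := congrArg (fun f : Fin n ≃o Fin n => f k) hE
    simp only [OrderIso.refl_apply] at h2
    rw [show ((StrictMono.orderIsoOfSurjective (⇑x⁻¹) hsm x⁻¹.surjective : Fin n ≃o Fin n) k)
        = x⁻¹ k from
      congrFun (StrictMono.coe_orderIsoOfSurjective (⇑x⁻¹) hsm x⁻¹.surjective) k] at h2
    simp [h2]
  rw [← inv_inv x, hinv, inv_one]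

lemma exists_word (x : Perm (Fin n)) :
    ∃ l : List (Perm (Fin n)), l.length = invC x ∧ (∀ s ∈ l, IsAdjTrans s) ∧ l.prod = x := by
  generalize hm : invC x = m
  induction m using Nat.strong_induction_on generalizing x with
  | _ m ih =>
  by_cases hdesc : ∃ i, ∃ hi : i + 1 < n, x⁻¹ ⟨i + 1, hi⟩ < x⁻¹ ⟨i, Nat.lt_of_succ_lt hi⟩
  · obtain ⟨i, hi, hd⟩ := hdesc
    set a : Fin n := ⟨i, Nat.lt_of_succ_lt hi⟩
    set b : Fin n := ⟨i + 1, hi⟩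
    have hab : a < b := Fin.mk_lt_mk.mpr (Nat.lt_succ_self i)
    have hadj : (b : ℕ) = (a : ℕ) + 1 := rfl
    set y := Equiv.swap a b * x with hy
    have hxy : x = Equiv.swap a b * y := by
      rw [hy, ← mul_assoc, Equiv.swap_mul_self, one_mul]
    have hlt : invC y < invC x := invC_swap_lt hab hadj x hd
    have hge : invC x ≤ invC y + 1 := by
      calc invC x = invC (Equiv.swap a b * y) := by rw [← hxy]
        _ ≤ invC y + 1 := invC_swap_le hab hadj y
    obtain ⟨l, hlen, hadjl, hprod⟩ := ih (invC y) (hm ▸ hlt) y rfl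
    refine ⟨Equiv.swap a b :: l, ?_, ?_, ?_⟩
    · simp only [List.length_cons, hlen]; omega
    · intro s hs
      rcases List.mem_cons.mp hs with rfl | hs
      · exact ⟨i, hi, rfl⟩
      · exact hadjl s hs
    · rw [List.prod_cons, hprod, ← hxy]
  · push_neg at hdesc
    have hx1 : x = 1 := by
      apply eq_one_of_no_descent
      intro i hi
      rcases (hdesc i hi).lt_or_eq with h | h
      · exact h
      · exact absurd (x⁻¹.injective h) (by simp [Fin.ext_iff])
    subst hx1
    refine ⟨[], ?_, by simp, by simp⟩
    simp [← hm, invC_one]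

lemma invC_le_length (l : List (Perm (Fin n))) (h : ∀ s ∈ l, IsAdjTrans s) :
    invC l.prod ≤ l.length := by
  induction l with
  | nil => simp [invC_one]
  | cons s l ih =>
    obtain ⟨i, hi, rfl⟩ := h s List.mem_cons_self
    rw [List.prod_cons, List.length_cons]
    have hab : (⟨i, Nat.lt_of_succ_lt hi⟩ : Fin n) < ⟨i + 1, hi⟩ := Fin.mk_lt_mk.mpr (Nat.lt_succ_self i)
    calc invC (Equiv.swap _ _ * l.prod) ≤ invC l.prod + 1 := invC_swap_le hab rfl l.prod
      _ ≤ l.length + 1 := by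
        have := ih (fun s hs => h s (List.mem_cons_of_mem _ hs))
        omega

lemma permLength_eq_invC (x : Perm (Fin n)) : permLength x = invC x := by
  have hne : {k | ∃ l : List (Perm (Fin n)), l.length = k ∧ (∀ s ∈ l, IsAdjTrans s)
      ∧ l.prod = x}.Nonempty := by
    obtain ⟨l, h1, h2, h3⟩ := exists_word x
    exact ⟨invC x, l, h1, h2, h3⟩
  apply le_antisymm
  · obtain ⟨l, h1, h2, h3⟩ := exists_word x
    exact Nat.sInf_le ⟨l, h1, h2, h3⟩
  · obtain ⟨l, h1, h2, h3⟩ := Nat.sInf_mem hne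
    rw [permLength, ← h1, ← h3]
    exact invC_le_length l h2


lemma invC_lt_invC_swap {a b : Fin n} (hab : a < b) (x : Perm (Fin n))
    (hpq : x⁻¹ a < x⁻¹ b) : invC x < invC (Equiv.swap a b * x) := by
  set p := x⁻¹ a with hp
  set q := x⁻¹ b with hq
  set y := Equiv.swap a b * x with hy
  have hxp : x p = a := x.apply_symm_apply a
  have hxq : x q = b := x.apply_symm_apply b
  have hkp_iff : ∀ k, x k = a ↔ k = p := fun k =>
    ⟨fun h => by rw [hp, ← h, Perm.inv_def, Equiv.symm_apply_apply], fun h => h ▸ hxp⟩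
  have hkq_iff : ∀ k, x k = b ↔ k = q := fun k =>
    ⟨fun h => by rw [hq, ← h, Perm.inv_def, Equiv.symm_apply_apply], fun h => h ▸ hxq⟩
  have hyk : ∀ k : Fin n, k ≠ p → k ≠ q → y k = x k := by
    intro k hkp hkq
    rw [hy, Perm.mul_apply]
    exact Equiv.swap_apply_of_ne_of_ne (fun hc => hkp ((hkp_iff k).mp hc))
      (fun hc => hkq ((hkq_iff k).mp hc))
  have hyp : y p = b := by rw [hy, Perm.mul_apply, hxp, Equiv.swap_apply_left]
  have hyq : y q = a := by rw [hy, Perm.mul_apply, hxq, Equiv.swap_apply_right]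
  set F : Fin n × Fin n → Fin n × Fin n := fun c =>
    if c.2 = p ∧ x c.1 < b then (c.1, q)
    else if c.1 = q ∧ a < x c.2 then (p, c.2) else c with hF
  have hmaps : ∀ c ∈ invF x, F c ∈ (invF y).erase (p, q) := by
    intro c hc
    rw [mem_invF] at hc
    obtain ⟨hc1, hc2⟩ := hc
    rw [Finset.mem_erase, mem_invF, hF]
    by_cases hB1 : c.2 = p ∧ x c.1 < b
    · simp only [if_pos hB1]
      have hxc2 : x c.2 = a := by rw [hB1.1, hxp]
      have haxk : a < x c.1 := hxc2 ▸ hc2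
      have hk_ne_p : c.1 ≠ p := fun h => (ne_of_gt haxk) ((hkp_iff c.1).mpr h)
      have hk_ne_q : c.1 ≠ q := fun h => (ne_of_lt hB1.2) ((hkq_iff c.1).mpr h)
      refine ⟨fun h => hk_ne_p (congrArg Prod.fst h), ?_, ?_⟩
      · exact lt_trans (hB1.1 ▸ hc1) hpq
      · rw [hyq, hyk c.1 hk_ne_p hk_ne_q]; exact haxk
    · simp only [if_neg hB1]
      by_cases hB2 : c.1 = q ∧ a < x c.2
      · simp only [if_pos hB2]
        have hxc1 : x c.1 = b := by rw [hB2.1, hxq]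
        have hxc2b : x c.2 < b := hxc1 ▸ hc2
        have hl_ne_p : c.2 ≠ p := fun h => (ne_of_gt hB2.2) ((hkp_iff c.2).mpr h)
        have hl_ne_q : c.2 ≠ q := fun h => (ne_of_lt hxc2b) ((hkq_iff c.2).mpr h)
        refine ⟨fun h => hl_ne_q (congrArg Prod.snd h), ?_, ?_⟩
        · exact lt_trans hpq (hB2.1 ▸ hc1)
        · rw [hyp, hyk c.2 hl_ne_p hl_ne_q]; exact hxc2b
      · simp only [if_neg hB2]
        have hcne : c ≠ (p, q) := by
          intro h
          rw [h] at hc2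
          simp only [hxp, hxq] at hc2
          exact absurd hc2 (not_lt_of_gt hab)
        refine ⟨hcne, hc1, ?_⟩
        by_cases h1p : c.1 = p
        · have hxc1 : x c.1 = a := (hkp_iff c.1).mpr h1p
          have h2 : x c.2 < a := hxc1 ▸ hc2
          have hl_ne_p : c.2 ≠ p := fun h => (ne_of_lt h2) ((hkp_iff c.2).mpr h)
          have hl_ne_q : c.2 ≠ q := fun h => (ne_of_lt (lt_trans h2 hab)) ((hkq_iff c.2).mpr h)
          rw [h1p, hyp, hyk c.2 hl_ne_p hl_ne_q]
          exact lt_trans h2 hab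
        · by_cases h1q : c.1 = q
          · have hl_ne_p : c.2 ≠ p := by
              intro h
              rw [h1q, h] at hc1
              exact absurd hc1 (not_lt_of_gt hpq)
            have h2a : x c.2 ≠ a := fun h => hl_ne_p ((hkp_iff c.2).mp h)
            have h2le : ¬ a < x c.2 := fun h => hB2 ⟨h1q, h⟩
            have h2lt : x c.2 < a := lt_of_le_of_ne (not_lt.mp h2le) h2a
            have hl_ne_q : c.2 ≠ q := fun h => (ne_of_lt (lt_trans h2lt hab)) ((hkq_iff c.2).mpr h)
            rw [h1q, hyq, hyk c.2 hl_ne_p hl_ne_q]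
            exact h2lt
          · have hyc1 : y c.1 = x c.1 := hyk c.1 h1p h1q
            by_cases h2p : c.2 = p
            · have hble : ¬ x c.1 < b := fun h => hB1 ⟨h2p, h⟩
              have hbne : x c.1 ≠ b := fun h => h1q ((hkq_iff c.1).mp h)
              have : b < x c.1 := lt_of_le_of_ne (not_lt.mp hble) (Ne.symm hbne)
              rw [h2p, hyp, hyc1]
              exact this
            · by_cases h2q : c.2 = q
              · have hxc2 : x c.2 = b := (hkq_iff c.2).mpr h2q
                rw [h2q, hyq, hyc1]
                exact lt_trans hab (hxc2 ▸ hc2)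
              · rw [hyk c.2 h2p h2q, hyc1]
                exact hc2
  have hinj : Set.InjOn F ↑(invF x) := by
    intro c hc c' hc' heq
    rw [Finset.mem_coe, mem_invF] at hc hc'
    obtain ⟨hc1, hc2⟩ := hc
    obtain ⟨hc1', hc2'⟩ := hc'
    rw [hF] at heq
    simp only at heq
    by_cases hB1 : c.2 = p ∧ x c.1 < b
    · rw [if_pos hB1] at heq
      by_cases hB1' : c'.2 = p ∧ x c'.1 < b
      · rw [if_pos hB1', Prod.ext_iff] at heq
        exact Prod.ext heq.1 (hB1.1.trans hB1'.1.symm)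
      · rw [if_neg hB1'] at heq
        by_cases hB2' : c'.1 = q ∧ a < x c'.2
        · rw [if_pos hB2', Prod.ext_iff] at heq
          -- (c.1, q) = (p, c'.2): c.1 = p; but c.1 < c.2 = p
          have h1 : c.1 = p := heq.1
          rw [h1, hB1.1] at hc1
          exact absurd hc1 (lt_irrefl p)
        · rw [if_neg hB2', Prod.ext_iff] at heq
          -- c' = (c.1, q)
          have h1 : c'.1 = c.1 := heq.1.symm
          have h2 : c'.2 = q := heq.2.symm
          rw [h2, hxq, h1] at hc2'
          exact absurd (lt_trans hc2' hB1.2) (lt_irrefl b)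
    · rw [if_neg hB1] at heq
      by_cases hB2 : c.1 = q ∧ a < x c.2
      · rw [if_pos hB2] at heq
        by_cases hB1' : c'.2 = p ∧ x c'.1 < b
        · rw [if_pos hB1', Prod.ext_iff] at heq
          have h1 : c'.1 = p := heq.1.symm
          rw [h1, hB1'.1] at hc1'
          exact absurd hc1' (lt_irrefl p)
        · rw [if_neg hB1'] at heq
          by_cases hB2' : c'.1 = q ∧ a < x c'.2
          · rw [if_pos hB2', Prod.ext_iff] at heq
            exact Prod.ext (hB2.1.trans hB2'.1.symm) heq.2
          · rw [if_neg hB2', Prod.ext_iff] at heq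
            -- c' = (p, c.2)
            have h1 : c'.1 = p := heq.1.symm
            have h2 : c'.2 = c.2 := heq.2.symm
            rw [h1, hxp, h2] at hc2'
            exact absurd (lt_trans hc2' hB2.2) (lt_irrefl _)
      · rw [if_neg hB2] at heq
        by_cases hB1' : c'.2 = p ∧ x c'.1 < b
        · rw [if_pos hB1', Prod.ext_iff] at heq
          -- c = (c'.1, q)
          have h1 : c.1 = c'.1 := heq.1
          have h2 : c.2 = q := heq.2
          rw [h2, hxq, h1] at hc2
          exact absurd (lt_trans hc2 hB1'.2) (lt_irrefl b)
        · rw [if_neg hB1'] at heq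
          by_cases hB2' : c'.1 = q ∧ a < x c'.2
          · rw [if_pos hB2', Prod.ext_iff] at heq
            have h1 : c.1 = p := heq.1
            have h2 : c.2 = c'.2 := heq.2
            rw [h1, hxp, h2] at hc2
            exact absurd (lt_trans hc2 hB2'.2) (lt_irrefl _)
          · rw [if_neg hB2'] at heq
            exact heq
  have hPy : (p, q) ∈ invF y := mem_invF.mpr ⟨hpq, by rw [hyp, hyq]; exact hab⟩
  calc invC x ≤ ((invF y).erase (p, q)).card :=
        Finset.card_le_card_of_injOn F hmaps hinj
    _ < invC y := Finset.card_erase_lt_of_mem hPy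

end Stmt9Aux

namespace Stmt9Aux
variable {n : ℕ}

lemma permLength_lt_swap {a b : Fin n} (hab : a < b) (x : Perm (Fin n))
    (h : x⁻¹ a < x⁻¹ b) : permLength x < permLength (Equiv.swap a b * x) := by
  rw [permLength_eq_invC, permLength_eq_invC]
  exact invC_lt_invC_swap hab x h

lemma bruhat_lt_length {x z : Perm (Fin n)} (h : BruhatLT x z) :
    permLength x < permLength z := by
  induction h with
  | single h => obtain ⟨t, _, _, hlen⟩ := h; exact hlen
  | tail _ h ih => obtain ⟨t, _, _, hlen⟩ := h; exact lt_trans ih hlen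

lemma bruhat_le_length {x z : Perm (Fin n)}
    (h : Relation.ReflTransGen
      (fun u v => ∃ t : Perm (Fin n), t.IsSwap ∧ v = t * u ∧ permLength u < permLength v) x z) :
    permLength x ≤ permLength z := by
  induction h with
  | refl => exact le_refl _
  | tail _ h ih =>
    obtain ⟨t, _, _, hlen⟩ := h
    omega

lemma cover_extract {x z : Perm (Fin n)} (h : BruhatLT x z)
    (hc : permLength z = permLength x + 1) :
    ∃ t : Perm (Fin n), t.IsSwap ∧ z = t * x := by
  obtain ⟨m, hxm, hmz⟩ := Relation.TransGen.tail'_iff.mp h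
  rcases Relation.ReflTransGen.cases_head hxm with heq | ⟨c, h1, h2⟩
  · rw [← heq] at hmz
    obtain ⟨t, ht, hz, _⟩ := hmz
    exact ⟨t, ht, hz⟩
  · exfalso
    obtain ⟨t1, _, _, hlen1⟩ := h1
    have hlen2 := bruhat_le_length h2
    obtain ⟨t2, _, _, hlen3⟩ := hmz
    omega

lemma blockIdx_mono {α : Partn} {n : ℕ} (hn : PartnOf α n) {v w : ℕ}
    (hvw : v ≤ w) (hw : w < n) : blockIdx α v ≤ blockIdx α w := by
  obtain ⟨N, hN0, hNs⟩ := hn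
  have hNmem : w < psum α N := by rw [psum, hNs]; exact hw
  have hmem := Nat.sInf_mem (⟨N, hNmem⟩ : {u | w < psum α u}.Nonempty)
  exact Nat.sInf_le (lt_of_le_of_lt hvw hmem)

end Stmt9Aux

/-- a Bruhat cover `x ⋖ z` between permutations corresponding to
LR-fillings yields a single decreasing box move between the fillings. -/
theorem stmt9 (n : ℕ) (α β γ : Partn) (hsub : PartnSub γ β) (hrook : RookStrip β γ)
    (hn : PartnOf α n) (e : Fin n → ℕ × ℕ) (he : IsRowRead β γ e)
    (X Z : SkFilling α β γ) (hX : IsLRF X) (hZ : IsLRF Z)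
    (x z : Perm (Fin n)) (hx : IsStdOf α X e x) (hz : IsStdOf α Z e z)
    (hlt : BruhatLT x z) (hcov : permLength z = permLength x + 1) :
    BoxMove X Z := by
  classical
  obtain ⟨t, htsw, htz⟩ := Stmt9Aux.cover_extract hlt hcov
  obtain ⟨a0, b0, hne0, ht0⟩ := htsw
  obtain ⟨a, b, hab, ht⟩ : ∃ a b : Fin n, a < b ∧ t = Equiv.swap a b := by
    rcases lt_or_gt_of_ne hne0 with h | h
    · exact ⟨a0, b0, h, ht0⟩
    · exact ⟨b0, a0, h, ht0.trans (Equiv.swap_comm a0 b0)⟩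
  rw [ht] at htz
  set p := x⁻¹ a with hp
  set q := x⁻¹ b with hq
  have hxp : x p = a := x.apply_symm_apply a
  have hxq : x q = b := x.apply_symm_apply b
  have hzk : ∀ k, z k = Equiv.swap a b (x k) := fun k => by rw [htz]; rfl
  have hzp : z p = b := by rw [hzk, hxp, Equiv.swap_apply_left]
  have hzq : z q = a := by rw [hzk, hxq, Equiv.swap_apply_right]
  have hplen : permLength x < permLength z := by omega
  have hpq : p < q := by
    rcases lt_trichotomy p q with h | h | h
    · exact h
    · exfalso
      have : a = b := by rw [← hxp, h, hxq]
      exact (ne_of_lt hab) this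
    · exfalso
      have hx' : x = Equiv.swap a b * z := by
        rw [htz, ← mul_assoc, Equiv.swap_mul_self, one_mul]
      have hza : z⁻¹ a = q := by
        rw [htz, mul_inv_rev, Equiv.Perm.mul_apply, Equiv.swap_inv, Equiv.swap_apply_left]
      have hzb : z⁻¹ b = p := by
        rw [htz, mul_inv_rev, Equiv.Perm.mul_apply, Equiv.swap_inv, Equiv.swap_apply_right]
      have hkey : permLength z < permLength (Equiv.swap a b * z) :=
        Stmt9Aux.permLength_lt_swap hab z (by rw [hza, hzb]; exact h)
      rw [← hx'] at hkey
      omega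
  have hXp : X.entry (e p) = blockIdx α (a : ℕ) := by
    have h1 := hx.1 p
    rw [hxp] at h1
    exact h1.symm
  have hXq : X.entry (e q) = blockIdx α (b : ℕ) := by
    have h1 := hx.1 q
    rw [hxq] at h1
    exact h1.symm
  have hZp : Z.entry (e p) = blockIdx α (b : ℕ) := by
    have h1 := hz.1 p
    rw [hzp] at h1
    exact h1.symm
  have hZq : Z.entry (e q) = blockIdx α (a : ℕ) := by
    have h1 := hz.1 q
    rw [hzq] at h1
    exact h1.symm
  have hble : blockIdx α (a : ℕ) ≤ blockIdx α (b : ℕ) :=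
    Stmt9Aux.blockIdx_mono hn (le_of_lt hab) b.isLt
  have hblt : blockIdx α (a : ℕ) < blockIdx α (b : ℕ) := by
    rcases lt_or_eq_of_le hble with h | h
    · exact h
    · exfalso
      have heq : Z.entry (e p) = Z.entry (e q) := by rw [hZp, hZq, h]
      have := hz.2 p q hpq heq
      rw [hzp, hzq] at this
      exact absurd this (not_lt_of_gt hab)
  have hErow : (e p).1 < (e q).1 := he.2.2.2 p q hpq
  refine ⟨e p, e q, he.1 p, he.1 q, hErow, ?_, ?_⟩
  · rw [hXp, hXq]; exact hblt
  · have hPQ : e p ≠ e q := fun h => (ne_of_lt hErow) (congrArg Prod.fst h)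
    have hfun : Function.update (Function.update X.entry (e p) (X.entry (e q))) (e q)
        (X.entry (e p)) = Z.entry := by
      funext c
      by_cases hcq : c = e q
      · subst hcq
        rw [Function.update_self, hXp, hZq]
      · rw [Function.update_of_ne hcq]
        by_cases hcp : c = e p
        · subst hcp
          rw [Function.update_self, hXq, hZp]
        · rw [Function.update_of_ne hcp]
          by_cases hcell : c ∈ SkewCells β γ
          · obtain ⟨k, hk⟩ := he.2.2.1 c hcell
            have hkp : k ≠ p := fun h => hcp (by rw [← hk, h])
            have hkq : k ≠ q := fun h => hcq (by rw [← hk, h])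
            have hxka : x k ≠ a := fun h => hkp (by rw [← hxp] at h; exact x.injective h)
            have hxkb : x k ≠ b := fun h => hkq (by rw [← hxq] at h; exact x.injective h)
            have hzk' : z k = x k := by
              rw [hzk k, Equiv.swap_apply_of_ne_of_ne hxka hxkb]
            calc X.entry c = blockIdx α ((x k : Fin n) : ℕ) := by rw [← hk, ← hx.1 k]
              _ = blockIdx α ((z k : Fin n) : ℕ) := by rw [hzk']
              _ = Z.entry c := by rw [← hk, ← hz.1 k]
          · rw [X.zero_outside c hcell, Z.zero_outside c hcell]
    rw [hfun]
end

section
/- Let X, Z be LR-fillings of the same type (α, β, γ). If Z <_dom X in the dominance order, then ω(Z) < ω(X) in the lexicographic order, where ω(T) is the word of entries of T obtained by reading columns from bottom to top, leftmost column first. -/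
open Equiv

/-! ### Auxiliary lemmas for the proof of Statement 11 -/

section Aux

open Finset

lemma aux_downclosed_eq_range (T : Finset ℕ) (h : ∀ a ∈ T, ∀ b ≤ a, b ∈ T) :
    T = Finset.range T.card := by
  have hsub : T ⊆ Finset.range T.card := by
    intro a ha
    have h1 : Finset.range (a+1) ⊆ T := fun b hb =>
      h a ha b (Nat.lt_succ_iff.mp (Finset.mem_range.mp hb))
    have h2 := Finset.card_le_card h1
    simp only [Finset.card_range] at h2
    exact Finset.mem_range.mpr h2
  exact Finset.eq_of_subset_of_card_le hsub (by simp)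

lemma aux_mem_skew {β γ : Partn} {c : ℕ × ℕ} :
    c ∈ SkewCells β γ ↔ γ.f c.1 ≤ c.2 ∧ c.2 < β.f c.1 := Iff.rfl

/-- The finset of boxes in row `i` of the skew diagram whose entry is at most `u`. -/
noncomputable def auxRowF {α β γ : Partn} (F : SkFilling α β γ) (u i : ℕ) : Finset ℕ :=
  (Finset.Ico (γ.f i) (β.f i)).filter (fun j => F.entry (i, j) ≤ u)

lemma aux_mem_rowF {α β γ : Partn} (F : SkFilling α β γ) (u i j : ℕ) :
    j ∈ auxRowF F u i ↔ (i, j) ∈ SkewCells β γ ∧ F.entry (i, j) ≤ u := by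
  simp [auxRowF, aux_mem_skew, Finset.mem_filter, Finset.mem_Ico, and_assoc]

lemma aux_regionRow_eq {α β γ : Partn} (F : SkFilling α β γ) (u i : ℕ) :
    regionRow F u i = γ.f i + (auxRowF F u i).card := by
  unfold regionRow
  congr 1
  have hset : {j | (i, j) ∈ SkewCells β γ ∧ F.entry (i, j) ≤ u} = ↑(auxRowF F u i) := by
    ext j; simp [aux_mem_rowF]
  rw [hset, Set.ncard_coe_finset]

lemma aux_mem_rowF_iff_lt {α β γ : Partn} {F : SkFilling α β γ} (hF : IsLRF F) (u i : ℕ) :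
    ∀ j, j ∈ auxRowF F u i ↔ γ.f i ≤ j ∧ j - γ.f i < (auxRowF F u i).card := by
  set S := auxRowF F u i with hS
  have hmem : ∀ j ∈ S, γ.f i ≤ j ∧ j < β.f i := by
    intro j hj
    have := (aux_mem_rowF F u i j).mp hj
    exact ⟨this.1.1, this.1.2⟩
  set T := S.image (fun j => j - γ.f i) with hT
  have hcard : T.card = S.card := by
    apply Finset.card_image_of_injOn
    intro a ha b hb hab
    have hab' : a - γ.f i = b - γ.f i := hab
    have h1 := hmem a ha
    have h2 := hmem b hb
    omega
  have hdc : ∀ a ∈ T, ∀ b ≤ a, b ∈ T := by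
    intro a haT b hba
    obtain ⟨j', hj', hje⟩ := Finset.mem_image.mp haT
    have h1 := hmem j' hj'
    have hjb : b + γ.f i ∈ S := by
      rw [aux_mem_rowF]
      have hsk : (i, b + γ.f i) ∈ SkewCells β γ := by
        simp only [aux_mem_skew]; omega
      have hsk' : (i, j') ∈ SkewCells β γ := by
        simp only [aux_mem_skew]; omega
      have hle : F.entry (i, b + γ.f i) ≤ F.entry (i, j') :=
        hF.1 i (b + γ.f i) j' hsk hsk' (by omega)
      exact ⟨hsk, le_trans hle ((aux_mem_rowF F u i j').mp hj').2⟩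
    have : b + γ.f i - γ.f i ∈ T := Finset.mem_image_of_mem _ hjb
    simpa using this
  have hTr : T = Finset.range S.card := by
    rw [← hcard]; exact aux_downclosed_eq_range T hdc
  intro j
  constructor
  · intro hj
    refine ⟨(hmem j hj).1, ?_⟩
    have : j - γ.f i ∈ T := Finset.mem_image_of_mem _ hj
    rw [hTr] at this
    exact Finset.mem_range.mp this
  · rintro ⟨h1, h2⟩
    have : j - γ.f i ∈ T := by rw [hTr]; exact Finset.mem_range.mpr h2
    obtain ⟨j', hj', hje⟩ := Finset.mem_image.mp this
    have h3 := (hmem j' hj').1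
    have : j' = j := by omega
    rwa [← this]

lemma aux_lt_regionRow_iff {α β γ : Partn} {F : SkFilling α β γ} (hF : IsLRF F) (u i j : ℕ) :
    j < regionRow F u i ↔ j < γ.f i ∨ ((i, j) ∈ SkewCells β γ ∧ F.entry (i, j) ≤ u) := by
  rw [aux_regionRow_eq]
  rw [← aux_mem_rowF F u i j]
  rw [aux_mem_rowF_iff_lt hF u i j]
  omega

lemma aux_regionRow_antitone {α β γ : Partn} {F : SkFilling α β γ} (hF : IsLRF F) (u : ℕ) :
    Antitone (regionRow F u) := by
  apply antitone_nat_of_succ_le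
  intro i
  have key : ∀ j, j < regionRow F u (i+1) → j < regionRow F u i := by
    intro j hj
    rw [aux_lt_regionRow_iff hF] at hj ⊢
    rcases hj with h | ⟨hs, he'⟩
    · exact Or.inl (lt_of_lt_of_le h (γ.antitone' (Nat.le_succ i)))
    · by_cases hγ : j < γ.f i
      · exact Or.inl hγ
      · refine Or.inr ?_
        have hβ : j < β.f i := lt_of_lt_of_le hs.2 (β.antitone' (Nat.le_succ i))
        have hsk : (i, j) ∈ SkewCells β γ := ⟨le_of_not_gt hγ, hβ⟩
        exact ⟨hsk, le_of_lt (lt_of_lt_of_le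
          (hF.2.1 i (i+1) j hsk hs (Nat.lt_succ_self i)) he')⟩
  by_contra h
  push_neg at h
  exact absurd (key _ h) (lt_irrefl _)

lemma aux_min_congr {a b J : ℕ} (h : ∀ t, t < J → (t < a ↔ t < b)) : min a J = min b J := by
  rcases lt_or_ge a J with h1 | h1
  · rcases lt_or_ge b J with h2 | h2
    · have h3 : ¬ a < b := fun hh => absurd ((h a h1).mpr hh) (lt_irrefl a)
      have h4 : ¬ b < a := fun hh => absurd ((h b h2).mp hh) (lt_irrefl b)
      have : a = b := by omega
      rw [this]
    · exact absurd ((h a h1).mpr (by omega)) (lt_irrefl a)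
  · rcases lt_or_ge b J with h2 | h2
    · exact absurd ((h b h2).mp (by omega)) (lt_irrefl b)
    · omega

lemma aux_minsum_le (f g : ℕ → ℕ) (N J : ℕ) (hanti : Antitone f)
    (hdom : ∀ m, m ≤ N → ∑ i ∈ Finset.range m, f i ≤ ∑ i ∈ Finset.range m, g i)
    (htot : ∑ i ∈ Finset.range N, f i = ∑ i ∈ Finset.range N, g i) :
    ∑ i ∈ Finset.range N, min (g i) J ≤ ∑ i ∈ Finset.range N, min (f i) J := by
  classical
  obtain ⟨m, hmN, h1, h2⟩ : ∃ m, m ≤ N ∧ (∀ i < m, J < f i) ∧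
      (∀ i, m ≤ i → i < N → f i ≤ J) := by
    by_cases hex : ∃ i, i < N ∧ f i ≤ J
    · obtain ⟨i0, hi0⟩ := id hex
      have hfle : Nat.find hex ≤ i0 := Nat.find_le hi0
      refine ⟨Nat.find hex, ?_, ?_, ?_⟩
      · exact le_of_lt (lt_of_le_of_lt hfle hi0.1)
      · intro i hi
        have hfind := hfle
        have hiN : i < N := by omega
        have hm := Nat.find_min hex hi
        push_neg at hm
        exact hm hiN
      · intro i hmi hiN
        exact le_trans (hanti hmi) (Nat.find_spec hex).2
    · push_neg at hex
      exact ⟨N, le_refl N, fun i hi => hex i hi, fun i h1 h2 => absurd h2 (not_lt.mpr h1)⟩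
  have hsplitf : ∑ i ∈ range m, f i + ∑ i ∈ Ico m N, f i = ∑ i ∈ range N, f i := by
    rw [range_eq_Ico, range_eq_Ico]; exact Finset.sum_Ico_consecutive f (Nat.zero_le m) hmN
  have hsplitg : ∑ i ∈ range m, g i + ∑ i ∈ Ico m N, g i = ∑ i ∈ range N, g i := by
    rw [range_eq_Ico, range_eq_Ico]; exact Finset.sum_Ico_consecutive g (Nat.zero_le m) hmN
  have hsplitF : ∑ i ∈ range m, min (f i) J + ∑ i ∈ Ico m N, min (f i) J
      = ∑ i ∈ range N, min (f i) J := by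
    rw [range_eq_Ico, range_eq_Ico]; exact Finset.sum_Ico_consecutive _ (Nat.zero_le m) hmN
  have hsplitG : ∑ i ∈ range m, min (g i) J + ∑ i ∈ Ico m N, min (g i) J
      = ∑ i ∈ range N, min (g i) J := by
    rw [range_eq_Ico, range_eq_Ico]; exact Finset.sum_Ico_consecutive _ (Nat.zero_le m) hmN
  have hA : ∑ i ∈ range m, min (f i) J = m * J := by
    rw [Finset.sum_congr rfl (fun i hi => min_eq_right (le_of_lt (h1 i (mem_range.mp hi))))]
    rw [Finset.sum_const, Finset.card_range, smul_eq_mul]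
  have hB : ∑ i ∈ Ico m N, min (f i) J = ∑ i ∈ Ico m N, f i := by
    apply Finset.sum_congr rfl
    intro i hi
    have := mem_Ico.mp hi
    exact min_eq_left (h2 i this.1 this.2)
  have hC : ∑ i ∈ range m, min (g i) J ≤ m * J := by
    calc ∑ i ∈ range m, min (g i) J ≤ ∑ _i ∈ range m, J :=
          Finset.sum_le_sum (fun i _ => min_le_right _ _)
      _ = m * J := by rw [Finset.sum_const, Finset.card_range, smul_eq_mul]
  have hD : ∑ i ∈ Ico m N, min (g i) J ≤ ∑ i ∈ Ico m N, g i :=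
    Finset.sum_le_sum (fun i _ => min_le_left _ _)
  have hdm := hdom m hmN
  omega

end Aux
section Aux2

open Finset

lemma aux_sum_regionRow_eq {α β γ : Partn} (X Z : SkFilling α β γ) (u N : ℕ)
    (hN : ∀ i, N ≤ i → β.f i = 0) :
    ∑ i ∈ Finset.range N, regionRow X u i = ∑ i ∈ Finset.range N, regionRow Z u i := by
  classical
  set M := β.f 0 with hM
  set D : Finset (ℕ × ℕ) :=
    (Finset.range N ×ˢ Finset.range M).filter
      (fun c => γ.f c.1 ≤ c.2 ∧ c.2 < β.f c.1) with hD
  have hDmem : ∀ c : ℕ × ℕ, c ∈ D ↔ c ∈ SkewCells β γ := by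
    intro c
    simp only [hD, Finset.mem_filter, Finset.mem_product, Finset.mem_range, aux_mem_skew]
    constructor
    · rintro ⟨-, h⟩; exact h
    · rintro ⟨h1, h2⟩
      have hb0 : β.f c.1 ≤ β.f 0 := β.antitone' (Nat.zero_le c.1)
      have hc1 : c.1 < N := by
        by_contra hc
        have := hN c.1 (le_of_not_gt hc)
        omega
      exact ⟨⟨hc1, by omega⟩, h1, h2⟩
  have hrow : ∀ (F : SkFilling α β γ),
      ∑ i ∈ Finset.range N, (auxRowF F u i).card
        = (D.filter (fun c => F.entry c ≤ u)).card := by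
    intro F
    have hmap : ∀ c ∈ D.filter (fun c => F.entry c ≤ u), Prod.fst c ∈ Finset.range N := by
      intro c hc
      have := (Finset.mem_filter.mp hc).1
      rw [hD, Finset.mem_filter, Finset.mem_product] at this
      exact this.1.1
    rw [Finset.card_eq_sum_card_fiberwise hmap]
    apply Finset.sum_congr rfl
    intro i hi
    apply Finset.card_bij (i := fun j _ => (i, j))
    · intro j hj
      have hj' := (aux_mem_rowF F u i j).mp hj
      simp only [Finset.mem_filter]
      refine ⟨⟨(hDmem (i, j)).mpr hj'.1, hj'.2⟩, by trivial⟩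
    · intro a ha b hb hab
      exact (Prod.mk.injEq _ _ _ _).mp hab |>.2
    · rintro ⟨i', j⟩ hc
      simp only [Finset.mem_filter] at hc
      obtain ⟨⟨hcD, hcu⟩, hfst⟩ := hc
      have hii : i' = i := hfst
      subst hii
      refine ⟨j, ?_, rfl⟩
      exact (aux_mem_rowF F u i' j).mpr ⟨(hDmem (i', j)).mp hcD, hcu⟩
  have hcontent : ∀ (F : SkFilling α β γ),
      (D.filter (fun c => F.entry c ≤ u)).card = ∑ u' ∈ Finset.Icc 1 u, α.f (u' - 1) := by
    intro F
    have hmap : ∀ c ∈ D.filter (fun c => F.entry c ≤ u), F.entry c ∈ Finset.Icc 1 u := by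
      intro c hc
      rw [Finset.mem_filter] at hc
      have hsk : c ∈ SkewCells β γ := (hDmem c).mp hc.1
      exact Finset.mem_Icc.mpr ⟨F.pos_inside c hsk, hc.2⟩
    rw [Finset.card_eq_sum_card_fiberwise hmap]
    apply Finset.sum_congr rfl
    intro u' hu'
    obtain ⟨hu1, hu2⟩ := Finset.mem_Icc.mp hu'
    have hff : (D.filter (fun c => F.entry c ≤ u)).filter (fun c => F.entry c = u')
        = D.filter (fun c => F.entry c = u') := by
      rw [Finset.filter_filter]
      apply Finset.filter_congr
      intro c _
      constructor
      · rintro ⟨-, h⟩; exact h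
      · intro h; exact ⟨by omega, h⟩
    rw [hff]
    have hset : {c ∈ SkewCells β γ | F.entry c = u'}
        = ↑(D.filter (fun c => F.entry c = u')) := by
      ext c
      simp only [Set.mem_setOf_eq, Finset.coe_filter, hDmem c]
    have := F.content u' hu1
    rw [hset, Set.ncard_coe_finset] at this
    exact this
  calc ∑ i ∈ Finset.range N, regionRow X u i
      = ∑ i ∈ Finset.range N, γ.f i + ∑ i ∈ Finset.range N, (auxRowF X u i).card := by
        rw [← Finset.sum_add_distrib]
        exact Finset.sum_congr rfl (fun i _ => aux_regionRow_eq X u i)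
    _ = ∑ i ∈ Finset.range N, γ.f i + ∑ i ∈ Finset.range N, (auxRowF Z u i).card := by
        rw [hrow X, hrow Z, hcontent X, hcontent Z]
    _ = ∑ i ∈ Finset.range N, regionRow Z u i := by
        rw [← Finset.sum_add_distrib]
        exact Finset.sum_congr rfl (fun i _ => (aux_regionRow_eq Z u i).symm)

end Aux2

/-- `Z <_dom X` implies `ω(Z) < ω(X)` lexicographically, where the
word `ω` reads columns left to right, each from bottom to top. -/
theorem stmt11 (n : ℕ) (α β γ : Partn) (hsub : PartnSub γ β)
    (e : Fin n → ℕ × ℕ) (he : IsColRead β γ e)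
    (X Z : SkFilling α β γ) (hX : IsLRF X) (hZ : IsLRF Z)
    (hdom : DomLE Z X ∧ Z ≠ X) :
    ∃ k : Fin n, (∀ j : Fin n, j < k → Z.entry (e j) = X.entry (e j)) ∧
      Z.entry (e k) < X.entry (e k) := by
  classical
  obtain ⟨hdle, hne⟩ := hdom
  have hexd : ∃ l : Fin n, Z.entry (e l) ≠ X.entry (e l) := by
    by_contra h
    push_neg at h
    apply hne
    have hent : Z.entry = X.entry := by
      funext c
      by_cases hc : c ∈ SkewCells β γ
      · obtain ⟨l, hl⟩ := he.2.2.1 c hc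
        rw [← hl]; exact h l
      · rw [Z.zero_outside c hc, X.zero_outside c hc]
    obtain ⟨ze, z1, z2, z3⟩ := Z
    obtain ⟨xe, x1, x2, x3⟩ := X
    have hent' : ze = xe := hent
    subst hent'
    rfl
  set K : Finset (Fin n) := Finset.univ.filter (fun l => Z.entry (e l) ≠ X.entry (e l))
    with hK
  have hKne : K.Nonempty := by
    obtain ⟨l, hl⟩ := hexd
    exact ⟨l, by simp [hK, hl]⟩
  set k : Fin n := K.min' hKne with hk
  have hkK : k ∈ K := K.min'_mem hKne
  have hkne : Z.entry (e k) ≠ X.entry (e k) := (Finset.mem_filter.mp hkK).2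
  have hagree : ∀ j : Fin n, j < k → Z.entry (e j) = X.entry (e j) := by
    intro j hj
    by_contra hcon
    have hjK : j ∈ K := Finset.mem_filter.mpr ⟨Finset.mem_univ j, hcon⟩
    exact absurd (K.min'_le j hjK) (not_le.mpr hj)
  refine ⟨k, hagree, ?_⟩
  rcases lt_or_gt_of_ne hkne with h | hgt
  · exact h
  exfalso
  set i0 := (e k).1 with hi0
  set j0 := (e k).2 with hj0
  have hck : e k ∈ SkewCells β γ := he.1 k
  have hck' : (i0, j0) ∈ SkewCells β γ := by rw [hi0, hj0]; exact hck
  set u := X.entry (e k) with hu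
  have heqX : X.entry (i0, j0) = X.entry (e k) := by rw [hi0, hj0]
  have heqZ : Z.entry (i0, j0) = Z.entry (e k) := by rw [hi0, hj0]
  have hcell : ∀ c' ∈ SkewCells β γ,
      (c'.2 < j0 ∨ (c'.2 = j0 ∧ i0 < c'.1)) → Z.entry c' = X.entry c' := by
    intro c' hc' hord
    obtain ⟨l, hl⟩ := he.2.2.1 c' hc'
    subst hl
    rcases lt_trichotomy l k with hlk | hlk | hlk
    · exact hagree l hlk
    · rw [hlk] at hord
      omega
    · have horder := he.2.2.2 k l hlk
      omega
  obtain ⟨N, hN⟩ := β.finite_supp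
  have hiN : i0 < N := by
    by_contra hc
    have h1 := hN i0 (le_of_not_gt hc)
    have h2 : j0 < β.f i0 := hck'.2
    omega
  set J := j0 + 1 with hJ
  have hXk : ∀ i' ≤ i0, J ≤ regionRow X u i' := by
    intro i' hi'
    have hlt : j0 < regionRow X u i' := by
      rw [aux_lt_regionRow_iff hX]
      by_cases hγ : j0 < γ.f i'
      · exact Or.inl hγ
      · have hβ : j0 < β.f i' := lt_of_lt_of_le hck'.2 (β.antitone' hi')
        have hsk : (i', j0) ∈ SkewCells β γ := ⟨le_of_not_gt hγ, hβ⟩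
        refine Or.inr ⟨hsk, ?_⟩
        rcases lt_or_eq_of_le hi' with hcase | hcase
        · have h1 := hX.2.1 i' i0 j0 hsk hck' hcase
          omega
        · have h3 : X.entry (i', j0) = X.entry (i0, j0) := by rw [hcase]
          omega
    omega
  have hZk : regionRow Z u i0 ≤ j0 := by
    by_contra hc
    push_neg at hc
    rw [aux_lt_regionRow_iff hZ] at hc
    rcases hc with hcc | ⟨hs, he'⟩
    · exact absurd hcc (not_lt.mpr hck'.1)
    · omega
  have hupper : ∀ i', i0 < i' → min (regionRow X u i') J = min (regionRow Z u i') J := by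
    intro i' hii
    apply aux_min_congr
    intro t ht
    rw [aux_lt_regionRow_iff hX, aux_lt_regionRow_iff hZ]
    have hent : ∀ _hsk : (i', t) ∈ SkewCells β γ, Z.entry (i', t) = X.entry (i', t) := by
      intro hsk
      apply hcell (i', t) hsk
      show t < j0 ∨ (t = j0 ∧ i0 < i')
      omega
    constructor
    · rintro (hh | ⟨hs, hle⟩)
      · exact Or.inl hh
      · exact Or.inr ⟨hs, by rw [hent hs]; exact hle⟩
    · rintro (hh | ⟨hs, hle⟩)
      · exact Or.inl hh
      · exact Or.inr ⟨hs, by rw [← hent hs]; exact hle⟩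
  have hsum_lt : ∑ i' ∈ Finset.range N, min (regionRow Z u i') J
      < ∑ i' ∈ Finset.range N, min (regionRow X u i') J := by
    apply Finset.sum_lt_sum
    · intro i' _
      rcases lt_trichotomy i' i0 with hc | hc | hc
      · have h1 := hXk i' (le_of_lt hc)
        omega
      · have h1 := hXk i' (le_of_eq hc)
        have h2 : regionRow Z u i' ≤ j0 := by rw [hc]; exact hZk
        omega
      · exact le_of_eq (hupper i' hc).symm
    · refine ⟨i0, Finset.mem_range.mpr hiN, ?_⟩
      have h1 := hXk i0 le_rfl
      omega
  have htot := aux_sum_regionRow_eq X Z u N hN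
  have hkey := aux_minsum_le (regionRow Z u) (regionRow X u) N J
    (aux_regionRow_antitone hZ u) (fun m _ => hdle u m) htot.symm
  omega
end
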